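/- arXiv:0704.3304 — 4 statements merged into one kernel-verified Lean document; each statement's English description precedes it below -/
import Mathlib

section
/- For 0 < α ≤ 1 and 0 < λ ≤ (1-α)/(1+α), the function Q(s) = (1-(1-s)^α)/(1-λ(1-s)^α) on [0,1) extends to a power series in s with nonnegative coefficients, with Q(1) = 1 (i.e., Q is a probability generating function). -/
open MeasureTheory Set

/-- The characteristic function of a measure `μ` on `ℝ`. -/
noncomputable def cf (μ : Measure ℝ) (t : ℝ) : ℂ :=
  ∫ x, Complex.exp (t * x * Complex.I) ∂μ

/-- `φ` is the characteristic function of some probability distribution on `ℝ`. -/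
def IsCF (φ : ℝ → ℂ) : Prop :=
  ∃ μ : Measure ℝ, IsProbabilityMeasure μ ∧ φ = cf μ

/-- `φ` is the characteristic function of an infinitely divisible distribution on `ℝ`. -/
def IsIDCF (φ : ℝ → ℂ) : Prop :=
  ∀ n : ℕ, 0 < n → ∃ ψ : ℝ → ℂ, IsCF ψ ∧ ∀ t, φ t = ψ t ^ n

/-- `P` is the probability generating function of a distribution on `{0,1,2,...}`:
on `[0,1]` it is given by a power series with nonnegative coefficients summing to `1`. -/
def IsPGF (P : ℝ → ℝ) : Prop :=
  ∃ p : ℕ → ℝ, (∀ n, 0 ≤ p n) ∧ (∑' n, p n) = 1 ∧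
    ∀ s ∈ Icc (0:ℝ) 1, P s = ∑' n, p n * s ^ n

/-- `P` is the PGF of an infinitely divisible distribution on `{0,1,2,...}`:
for every `n ≥ 1`, its `n`-th root (on `[0,1]`) is again a PGF. -/
def IsIDPGF (P : ℝ → ℝ) : Prop :=
  ∀ n : ℕ, 0 < n → ∃ Q : ℝ → ℝ, IsPGF Q ∧ ∀ s ∈ Icc (0:ℝ) 1, P s = Q s ^ n

open Finset

namespace CS

noncomputable def T (α : ℝ) (n : ℕ) : ℝ := ∏ i ∈ Finset.range n, (1 - α / (i+1))

noncomputable def G (α : ℝ) : ℕ → ℝ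
  | 0 => 0
  | n+1 => α * T α n / (n+1)

variable {α : ℝ} (hα0 : 0 < α) (hα1 : α < 1)

lemma T_zero : T α 0 = 1 := by simp [T]

lemma T_succ (n : ℕ) : T α (n+1) = T α n * (1 - α/(n+1)) := by
  simp [T, Finset.prod_range_succ]

include hα0 in
lemma frac_le (i : ℕ) : α / (i+1:ℝ) ≤ α := by
  apply div_le_self hα0.le
  have : (0:ℝ) ≤ i := Nat.cast_nonneg i
  linarith

include hα0 hα1 in
lemma T_pos (n : ℕ) : 0 < T α n := by
  apply Finset.prod_pos
  intro i _
  have := frac_le (α:=α) hα0 i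
  linarith

include hα0 hα1 in
lemma T_le_one (n : ℕ) : T α n ≤ 1 := by
  induction n with
  | zero => simp [T_zero]
  | succ n ih =>
    rw [T_succ]
    have h1 : 0 < T α n := T_pos hα0 hα1 n
    have h2 : 0 < α / (n+1:ℝ) := by positivity
    nlinarith

lemma G_zero : G α 0 = 0 := rfl

lemma G_one : G α 1 = α := by simp [G, T_zero]

lemma G_succ (n : ℕ) : G α (n+1) = α * T α n / (n+1) := rfl

include hα0 hα1 in
lemma G_nonneg (n : ℕ) : 0 ≤ G α n := by
  cases n with
  | zero => simp [G_zero]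
  | succ n =>
    rw [G_succ]
    have := T_pos hα0 hα1 n
    positivity

include hα0 hα1 in
lemma G_pos (n : ℕ) : 0 < G α (n+1) := by
  rw [G_succ]
  have := T_pos hα0 hα1 n
  positivity

include hα0 hα1 in
lemma G_le_one (n : ℕ) : G α n ≤ 1 := by
  cases n with
  | zero => simp [G_zero]
  | succ n =>
    rw [G_succ]
    rw [div_le_one (by positivity)]
    have h1 := T_le_one hα0 hα1 n
    have h2 := T_pos hα0 hα1 n
    have h3 : (1:ℝ) ≤ n+1 := by
      have : (0:ℝ) ≤ n := Nat.cast_nonneg n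
      linarith
    nlinarith

/-- the key recursion: (n+2) * G (n+2) = (n+1-α) * G (n+1) -/
lemma G_rec (n : ℕ) : (n+2:ℝ) * G α (n+2) = ((n+1:ℝ) - α) * G α (n+1) := by
  rw [G_succ, G_succ, T_succ]
  have h1 : (n+1:ℝ) ≠ 0 := by positivity
  have h2 : (n+2:ℝ) ≠ 0 := by positivity
  field_simp
  push_cast
  ring

/-- partial sums -/
lemma G_sum (n : ℕ) : ∑ m ∈ Finset.range (n+1), G α m = 1 - T α n := by
  induction n with
  | zero => simp [G_zero, T_zero]
  | succ n ih =>
    rw [Finset.sum_range_succ, ih, T_succ, G_succ]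
    push_cast
    ring



open Filter in
include hα0 hα1 in
lemma T_tendsto_zero : Tendsto (T α) atTop (nhds 0) := by
  have hbound : ∀ n, T α n ≤ 1 / (1 + α * ∑ i ∈ Finset.range n, (1:ℝ)/(i+1)) := by
    intro n
    have hprod : 1 + α * ∑ i ∈ Finset.range n, (1:ℝ)/(i+1)
        ≤ ∏ i ∈ Finset.range n, (1 + α / (i+1)) := by
      induction n with
      | zero => simp
      | succ n ih =>
        rw [Finset.prod_range_succ, Finset.sum_range_succ]
        have h1 : (0:ℝ) < α / (n+1) := by positivity
        have h2 : (1:ℝ) ≤ ∏ i ∈ Finset.range n, (1 + α / (i+1)) := by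
          have := Finset.prod_le_prod (s := Finset.range n) (f := fun _ => (1:ℝ))
            (g := fun i : ℕ => 1 + α/((i:ℝ)+1)) (by intros; norm_num)
            (by intro i _; nlinarith [div_nonneg hα0.le (by positivity : (0:ℝ) ≤ (i:ℝ)+1)])
          simpa using this
        have h3 : α * (1/(n+1:ℝ)) = α/(n+1) := by ring
        nlinarith
    have hTineq : T α n * ∏ i ∈ Finset.range n, (1 + α / (i+1)) ≤ 1 := by
      rw [T, ← Finset.prod_mul_distrib]
      apply Finset.prod_le_one
      · intro i _
        have h1 := frac_le (α := α) hα0 i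
        have h2 : (0:ℝ) < α/(i+1) := by positivity
        nlinarith
      · intro i _
        have h2 : (0:ℝ) ≤ α/(i+1) := by positivity
        nlinarith
    have hpos : (0:ℝ) < 1 + α * ∑ i ∈ Finset.range n, (1:ℝ)/(i+1) := by
      have : (0:ℝ) ≤ ∑ i ∈ Finset.range n, (1:ℝ)/(i+1) :=
        Finset.sum_nonneg (fun i _ => by positivity)
      nlinarith
    rw [le_div_iff₀ hpos]
    calc T α n * (1 + α * ∑ i ∈ Finset.range n, (1:ℝ)/(i+1))
        ≤ T α n * ∏ i ∈ Finset.range n, (1 + α / (i+1)) := by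
          apply mul_le_mul_of_nonneg_left hprod (T_pos hα0 hα1 n).le
      _ ≤ 1 := hTineq
  have hlim : Tendsto (fun n => 1 / (1 + α * ∑ i ∈ Finset.range n, (1:ℝ)/(i+1))) atTop (nhds 0) := by
    have hA : Tendsto (fun n => 1 + α * ∑ i ∈ Finset.range n, (1:ℝ)/(i+1)) atTop atTop := by
      apply tendsto_atTop_add_const_left
      exact (Real.tendsto_sum_range_one_div_nat_succ_atTop).const_mul_atTop hα0
    simpa [one_div, Pi.inv_def] using hA.inv_tendsto_atTop
  apply squeeze_zero (fun n => (T_pos hα0 hα1 n).le) hbound hlim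

include hα0 hα1 in
lemma G_summable : Summable (G α) := by
  apply summable_of_sum_range_le (c := 1) (fun n => G_nonneg hα0 hα1 n)
  intro n
  cases n with
  | zero => simp
  | succ n =>
    rw [G_sum]
    have := T_pos hα0 hα1 n
    linarith

open Filter in
include hα0 hα1 in
lemma G_tsum : ∑' n, G α n = 1 := by
  have h := (G_summable hα0 hα1).hasSum.tendsto_sum_nat
  have h2 : Tendsto (fun n => ∑ m ∈ Finset.range (n+1), G α m) atTop (nhds (∑' n, G α n)) :=
    h.comp (tendsto_add_atTop_nat 1)
  have h3 : Tendsto (fun n => 1 - T α n) atTop (nhds 1) := by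
    have := (T_tendsto_zero hα0 hα1).const_sub 1
    simpa using this
  have h4 : (fun n => ∑ m ∈ Finset.range (n+1), G α m) = fun n => 1 - T α n := by
    funext n; exact G_sum n
  rw [h4] at h2
  exact tendsto_nhds_unique h2 h3


/-! ### Binomial series -/

noncomputable def F (α y : ℝ) : ℝ := ∑' n, G α n * y ^ n
noncomputable def D (α y : ℝ) : ℝ := ∑' n, G α n * ((n:ℝ) * y ^ (n-1))

lemma summable_major {y : ℝ} (hy : |y| < 1) : Summable (fun n : ℕ => ((n:ℝ)+2) * |y|^n) := by
  have h1 : Summable (fun n : ℕ => (n:ℝ) * |y|^n) := by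
    have := summable_pow_mul_geometric_of_norm_lt_one (R := ℝ) 1 (by rwa [Real.norm_eq_abs, abs_abs])
    simpa using this
  have h2 : Summable (fun n : ℕ => |y|^n) := summable_geometric_of_lt_one (abs_nonneg y) hy
  have := (h1.add (h2.mul_left 2))
  apply this.congr
  intro n; ring

include hα0 hα1 in
lemma norm_term_le {y : ℝ} (n : ℕ) :
    ‖G α n * ((n:ℝ) * y ^ (n-1))‖ ≤ 2 * (((n:ℝ)+2) * (max |y| (1/2))^n) := by
  set m := max |y| (1/2) with hmdef
  have hm : (1:ℝ)/2 ≤ m := le_max_right _ _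
  have hym : |y| ≤ m := le_max_left _ _
  have hmpos : (0:ℝ) < m := lt_of_lt_of_le (by norm_num) hm
  rw [norm_mul, norm_mul, Real.norm_eq_abs, Real.norm_eq_abs, Real.norm_eq_abs]
  cases n with
  | zero => simp
  | succ n =>
    have hG0 := G_nonneg hα0 hα1 (n+1)
    have hG1 := G_le_one hα0 hα1 (n+1)
    have h1 : |y| ^ n ≤ m^n := pow_le_pow_left₀ (abs_nonneg y) hym n
    have h2 : |G α (n+1)| ≤ 1 := by rwa [abs_of_nonneg hG0]
    have hyn : |y ^ (n+1-1)| = |y|^n := by rw [abs_pow]; norm_num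
    have h3 : |((n+1:ℕ):ℝ)| = (n:ℝ)+1 := by
      rw [abs_of_nonneg (by positivity)]; push_cast; ring
    rw [hyn, h3]
    have hmn : (0:ℝ) ≤ m^n := by positivity
    have step1 : |G α (n+1)| * (((n:ℝ)+1) * |y|^n) ≤ ((n:ℝ)+1) * m^n := by
      have hnn : (0:ℝ) ≤ (n:ℝ)+1 := by positivity
      have h5 := mul_le_mul_of_nonneg_left h1 hnn
      have h6 := mul_le_mul h2 h5 (by positivity) zero_le_one
      rw [one_mul] at h6
      exact h6
    refine le_trans step1 ?_
    have hpow : m^(n+1) = m^n * m := pow_succ m n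
    push_cast
    rw [hpow]
    nlinarith [mul_nonneg (mul_nonneg (show (0:ℝ) ≤ (n:ℝ)+3 by positivity) hmn)
      (show (0:ℝ) ≤ 2*m-1 by linarith)]

include hα0 hα1 in
lemma F_summable {y : ℝ} (hy : |y| < 1) : Summable (fun n => G α n * y ^ n) := by
  apply Summable.of_norm_bounded (g := fun n : ℕ => |y|^n)
    (summable_geometric_of_lt_one (abs_nonneg y) hy)
  intro n
  rw [norm_mul, Real.norm_eq_abs, Real.norm_eq_abs, abs_pow]
  have hG0 := G_nonneg hα0 hα1 n
  have hG1 := G_le_one hα0 hα1 n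
  rw [abs_of_nonneg hG0]
  have : (0:ℝ) ≤ |y|^n := by positivity
  nlinarith

include hα0 hα1 in
lemma shifted_summable {y : ℝ} (hy : |y| < 1) (c : ℕ → ℝ) (hc : ∀ n, |c n| ≤ (n:ℝ)+2) :
    Summable (fun n : ℕ => c n * G α (n+1) * y ^ n) := by
  apply Summable.of_norm_bounded (g := fun n : ℕ => ((n:ℝ)+2) * |y|^n) (summable_major hy)
  intro n
  rw [norm_mul, norm_mul, Real.norm_eq_abs, Real.norm_eq_abs, Real.norm_eq_abs, abs_pow]
  have hG0 := G_nonneg hα0 hα1 (n+1)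
  have hG1 := G_le_one hα0 hα1 (n+1)
  rw [abs_of_nonneg hG0]
  have h1 := hc n
  have h2 : (0:ℝ) ≤ |y|^n := by positivity
  have h3 : (0:ℝ) ≤ |c n| := abs_nonneg _
  have e1 : |c n| * G α (n+1) ≤ (n:ℝ)+2 := by nlinarith
  calc |c n| * G α (n+1) * |y|^n ≤ ((n:ℝ)+2) * |y|^n := by
        apply mul_le_mul_of_nonneg_right e1 h2
    _ = ((n:ℝ)+2) * |y|^n := rfl

include hα0 hα1 in
lemma D_summable {y : ℝ} (hy : |y| < 1) :
    Summable (fun n : ℕ => G α n * ((n:ℝ) * y ^ (n-1))) := by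
  set m := max |y| (1/2) with hmdef
  have hm1 : m < 1 := max_lt hy (by norm_num)
  have hm0 : (0:ℝ) < m := lt_of_lt_of_le (by norm_num) (le_max_right _ _)
  have hmaj : Summable (fun n : ℕ => 2 * (((n:ℝ)+2) * m^n)) := by
    have := summable_major (y := m) (by rwa [abs_of_nonneg hm0.le])
    rw [abs_of_nonneg hm0.le] at this
    exact this.mul_left 2
  exact Summable.of_norm_bounded (g := _) hmaj (fun n => norm_term_le hα0 hα1 n)

include hα0 hα1 in
lemma D_eq {y : ℝ} (hy : |y| < 1) :
    D α y = ∑' n : ℕ, ((n:ℝ)+1) * G α (n+1) * y ^ n := by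
  rw [D, Summable.tsum_eq_zero_add (D_summable hα0 hα1 hy)]
  simp only [G_zero, Nat.cast_zero, zero_mul, mul_zero, zero_add]
  apply tsum_congr
  intro n
  have : (n+1-1 : ℕ) = n := rfl
  rw [this]
  push_cast
  ring

include hα0 hα1 in
lemma ODE {y : ℝ} (hy : |y| < 1) : (1 - y) * D α y = α * (1 - F α y) := by
  have hs1 : Summable (fun n : ℕ => ((n:ℝ)+1) * G α (n+1) * y ^ n) :=
    shifted_summable hα0 hα1 hy _ (fun n => by
      rw [abs_of_nonneg (by positivity)]; linarith)
  have hshift2 : Summable (fun n : ℕ => ((n:ℝ)+1-α) * G α (n+1) * y ^ n) :=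
    shifted_summable hα0 hα1 hy _ (fun n => by
      rw [abs_of_nonneg (by linarith [Nat.cast_nonneg (α := ℝ) n])]
      linarith [Nat.cast_nonneg (α := ℝ) n])
  have hD2 : D α y = α + ∑' n : ℕ, ((n:ℝ)+1-α) * G α (n+1) * y ^ (n+1) := by
    rw [D_eq hα0 hα1 hy, Summable.tsum_eq_zero_add hs1]
    simp only [Nat.cast_zero, zero_add, pow_zero, mul_one, G_one, one_mul]
    congr 1
    apply tsum_congr
    intro n
    have hrec := G_rec (α := α) n
    push_cast
    push_cast at hrec
    linear_combination (y^(n+1)) * hrec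
  have hyD : y * D α y = ∑' n : ℕ, ((n:ℝ)+1) * G α (n+1) * y ^ (n+1) := by
    rw [D_eq hα0 hα1 hy, ← tsum_mul_left]
    apply tsum_congr
    intro n
    ring
  have hsum2 : Summable (fun n : ℕ => ((n:ℝ)+1-α) * G α (n+1) * y ^ (n+1)) := by
    have := hshift2.mul_right y
    apply this.congr
    intro n
    ring
  have hsum3 : Summable (fun n : ℕ => ((n:ℝ)+1) * G α (n+1) * y ^ (n+1)) := by
    have := hs1.mul_right y
    apply this.congr
    intro n
    ring
  have hFs : F α y = ∑' n : ℕ, G α (n+1) * y ^ (n+1) := by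
    rw [F, Summable.tsum_eq_zero_add (F_summable hα0 hα1 hy)]
    simp [G_zero]
  have key : ∑' n : ℕ, ((n:ℝ)+1-α) * G α (n+1) * y ^ (n+1)
      - ∑' n : ℕ, ((n:ℝ)+1) * G α (n+1) * y ^ (n+1)
      = -α * ∑' n : ℕ, G α (n+1) * y ^ (n+1) := by
    rw [← Summable.tsum_sub hsum2 hsum3, ← tsum_mul_left]
    apply tsum_congr
    intro n
    ring
  have expand : (1 - y) * D α y = D α y - y * D α y := by ring
  rw [expand, hyD, hD2, hFs]
  linarith [key]


open Filter in
include hα0 hα1 in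
lemma F_hasDeriv {s : ℝ} (hs0 : 0 ≤ s) (hs1 : s < 1) {y : ℝ}
    (hy : y ∈ Set.Ioo (-((1+s)/2)) ((1+s)/2)) :
    HasDerivAt (F α) (D α y) y := by
  set r := (1+s)/2 with hrdef
  have hr0 : 0 < r := by rw [hrdef]; linarith
  have hr1 : r < 1 := by rw [hrdef]; linarith
  have hmaj : Summable (fun n : ℕ => 2 * (((n:ℝ)+2) * (max r (1/2))^n)) := by
    have hmr : |max r (1/2)| < 1 := by
      rw [abs_of_nonneg (le_trans (by norm_num) (le_max_right r (1/2)))]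
      exact max_lt hr1 (by norm_num)
    have := summable_major (y := max r (1/2)) hmr
    rw [abs_of_nonneg (le_trans (by norm_num) (le_max_right r (1/2)))] at this
    exact this.mul_left 2
  have key := hasDerivAt_tsum_of_isPreconnected (F := ℝ) (𝕜 := ℝ)
    (u := fun n : ℕ => 2 * (((n:ℝ)+2) * (max r (1/2))^n))
    (t := Set.Ioo (-r) r)
    (g := fun n y => G α n * y ^ n)
    (g' := fun n y => G α n * ((n:ℝ) * y ^ (n-1)))
    (y₀ := 0) (y := y)
    hmaj isOpen_Ioo (convex_Ioo _ _).isPreconnected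
    (fun n z _ => by
      have := (hasDerivAt_pow n z).const_mul (G α n)
      simpa using this)
    (fun n z hz => by
      have hzr : |z| ≤ r := by
        rw [abs_le]
        constructor
        · have := hz.1; linarith
        · have := hz.2; linarith
      have h1 := norm_term_le hα0 hα1 (y := z) n
      refine le_trans h1 ?_
      have hmono : (max |z| (1/2))^n ≤ (max r (1/2))^n := by
        apply pow_le_pow_left₀ (le_trans (by norm_num) (le_max_right _ _))
        exact max_le_max hzr le_rfl

      nlinarith [pow_nonneg (le_trans (by norm_num : (0:ℝ) ≤ 1/2) (le_max_right (|z|) (1/2))) n]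
      )
    (by
      constructor <;> [linarith; linarith])
    (by
      have hz : (fun n : ℕ => G α n * (0:ℝ) ^ n) = (fun _ => (0:ℝ)) := by
        funext n
        cases n with
        | zero => simp [G_zero]
        | succ n => simp
      rw [hz]
      exact summable_zero)
    hy
  exact key

include hα0 hα1 in
lemma binomial (s : ℝ) (hs0 : 0 ≤ s) (hs1 : s < 1) :
    1 - F α s = (1 - s) ^ α := by
  set r := (1+s)/2 with hrdef
  have hr0 : 0 < r := by rw [hrdef]; linarith
  have hr1 : r < 1 := by rw [hrdef]; linarith
  have hsr : s < r := by rw [hrdef]; linarith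
  set h : ℝ → ℝ := fun y => (1 - F α y) * (1 - y) ^ (-α) with hhdef
  have hderiv : ∀ y ∈ Set.Ioo (-r) r, HasDerivAt h 0 y := by
    intro y hy
    have hy1 : |y| < 1 := by
      rw [abs_lt]
      exact ⟨by linarith [hy.1], by linarith [hy.2]⟩
    have hypos : 0 < 1 - y := by linarith [hy.2]
    have hF := F_hasDeriv hα0 hα1 hs0 hs1 hy
    have h1 : HasDerivAt (fun y => 1 - F α y) (-(D α y)) y := hF.const_sub 1
    have h2 : HasDerivAt (fun y : ℝ => (1 - y) ^ (-α)) (α * (1 - y) ^ (-α - 1)) y := by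
      have ha := Real.hasDerivAt_rpow_const (x := 1 - y) (p := -α) (Or.inl hypos.ne')
      have hb : HasDerivAt (fun y : ℝ => 1 - y) (-1) y := (hasDerivAt_id y).const_sub 1
      have := ha.comp y hb
      refine this.congr_deriv (Eq.symm ?_)
      ring
    have := h1.mul h2
    refine this.congr_deriv (Eq.symm ?_)
    have hode := ODE hα0 hα1 hy1
    have hsplit : (1 - y) ^ (-α) = (1 - y) ^ (-α - 1) * (1 - y) := by
      rw [show (-α : ℝ) = (-α - 1) + 1 by ring, Real.rpow_add hypos, Real.rpow_one]
      ring_nf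
    rw [hsplit]
    linear_combination ((1 - y) ^ (-α - 1)) * hode
  have hcont : ContinuousOn h (Set.Icc 0 s) := by
    intro y hy
    have : y ∈ Set.Ioo (-r) r := ⟨by linarith [hy.1], by linarith [hy.2]⟩
    exact ((hderiv y this).continuousAt).continuousWithinAt
  have hconst := constant_of_has_deriv_right_zero hcont (fun y hy => by
    have : y ∈ Set.Ioo (-r) r := ⟨by linarith [hy.1], by linarith [hy.2]⟩
    exact ((hderiv y this).hasDerivWithinAt))
  have hs := hconst s (Set.right_mem_Icc.mpr hs0)
  have hF0 : F α 0 = 0 := by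
    rw [F]
    have : ∀ n : ℕ, G α n * (0:ℝ) ^ n = 0 := by
      intro n
      cases n with
      | zero => simp [G_zero]
      | succ n => simp
    rw [tsum_congr this]
    simp
  have hh0 : h 0 = 1 := by
    rw [hhdef]
    simp [hF0]
  rw [hh0] at hs
  have hspos : 0 < 1 - s := by linarith
  have hinv : (1 - s) ^ (-α) = ((1-s)^α)⁻¹ := by
    rw [← Real.rpow_neg hspos.le]
  have hppos : (0:ℝ) < (1-s)^α := Real.rpow_pos_of_pos hspos α
  rw [hhdef] at hs
  simp only at hs
  rw [hinv] at hs
  field_simp at hs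
  linarith [hs]


/-! ### The quotient coefficients -/

noncomputable def P (α lam : ℝ) : ℕ → ℝ
  | 0 => 0
  | n+1 => (G α (n+1) - lam * ∑ m ∈ (Finset.range (n+1)).attach,
      P α lam m * G α (n+1-(m:ℕ))) / (1-lam)
  decreasing_by exact Finset.mem_range.mp m.2

noncomputable def V (α lam : ℝ) (N : ℕ) : ℝ := ∑ m ∈ Finset.range N, P α lam m * G α (N-m)

lemma P_zero (lam : ℝ) : P α lam 0 = 0 := by rw [P]

lemma P_succ (lam : ℝ) (n : ℕ) :
    P α lam (n+1) = (G α (n+1) - lam * V α lam (n+1)) / (1-lam) := by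
  rw [P, V]
  congr 2
  exact congrArg (lam * ·) (Finset.sum_attach (Finset.range (n+1)) (fun m => P α lam m * G α (n+1-m)))

variable {lam : ℝ} (hl0 : 0 < lam) (hlam : lam * (1+α) ≤ 1 - α)

include hα0 hl0 hlam in
lemma lam_lt_one : lam < 1 := by nlinarith

include hα0 hα1 hl0 hlam in
lemma key_invariant : ∀ N, lam * V α lam N ≤ G α N := by
  have hl1 : lam < 1 := lam_lt_one hα0 hl0 hlam
  intro N
  induction N using Nat.strong_induction_on with
  | _ N ih =>
    -- nonnegativity of P m for m ≤ N (from ih for m < N)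
    have hPnn : ∀ m, m < N → 0 ≤ P α lam m := by
      intro m hm
      cases m with
      | zero => rw [P_zero]
      | succ k =>
        rw [P_succ]
        have := ih (k+1) hm
        have h1 : 0 < 1 - lam := by linarith
        apply div_nonneg _ h1.le
        linarith
    rcases N with _ | _ | _ | K
    · simp [V, G_zero]
    on_goal 1 =>
      have : V α lam 1 = 0 := by
        simp [V, P_zero]
      rw [this, mul_zero]
      exact G_nonneg hα0 hα1 1
    on_goal 1 =>
      have hV : V α lam 2 = P α lam 1 * α := by
        rw [V]
        rw [Finset.sum_range_succ, Finset.sum_range_one]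
        simp [P_zero, G_one]
      have hP1 : P α lam 1 = α / (1-lam) := by
        rw [P_succ]
        have : V α lam 1 = 0 := by simp [V, P_zero]
        rw [this, G_one]
        ring
      have hG2 : G α 2 = α * (1 - α) / 2 := by
        rw [G_succ]
        rw [T_succ, T_zero]
        norm_num
      rw [hV, hP1, hG2]
      have h1 : 0 < 1 - lam := by linarith
      have h2 : lam * (α / (1 - lam) * α) = (lam*α*α)/(1-lam) := by ring
      rw [h2, div_le_iff₀ h1]
      nlinarith [mul_nonneg hα0.le (show (0:ℝ) ≤ (1-α) - lam*(1+α) by linarith)]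
    on_goal 1 =>
      -- inductive step with base K+2 ≥ 2
      set M := K + 2 with hMdef
      clear_value M
      have hM2 : 2 ≤ M := by omega
      have hMN : M < M + 1 := by omega
      have ihM := ih M (by omega)
      have hPM : 0 ≤ P α lam M := hPnn M (by omega)
      have hPMeq : (1 - lam) * P α lam M = G α M - lam * V α lam M := by
        have : M = (K+1)+1 := by omega
        rw [this, P_succ]
        have h1 : (1:ℝ) - lam ≠ 0 := by linarith
        field_simp
      -- split V (M+1)
      have hsplit : V α lam (M+1) = (∑ m ∈ Finset.range M, P α lam m * G α (M+1-m))
          + P α lam M * G α 1 := by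
        rw [V, Finset.sum_range_succ]
        simp
      -- the ratio bound
      set c : ℝ := ((M:ℝ) - 1 - α) / M with hcdef
      have hMR : (2:ℝ) ≤ (M:ℝ) := by exact_mod_cast hM2
      have hc0 : 0 ≤ c := by
        apply div_nonneg _ (by linarith)
        linarith
      have hratio : ∀ m ∈ Finset.range M, P α lam m * G α (M+1-m) ≤ c * (P α lam m * G α (M-m)) := by
        intro m hm
        rw [Finset.mem_range] at hm
        rcases Nat.eq_zero_or_pos m with rfl | hm1
        · rw [P_zero]
          simp
        · have hPm : 0 ≤ P α lam m := hPnn m (by omega)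
          -- j = M - m, 1 ≤ j, j + 1 ≤ M
          obtain ⟨i, hi⟩ : ∃ i, M - m = i + 1 := ⟨M - m - 1, by omega⟩
          have hM1m : M + 1 - m = (i+1) + 1 := by omega
          rw [hM1m, hi]
          have hrec := G_rec (α := α) i
          have hiM : (i:ℝ) + 2 ≤ (M:ℝ) := by
            have : i + 2 ≤ M := by omega
            exact_mod_cast this
          have hGpos : 0 ≤ G α (i+1) := G_nonneg hα0 hα1 (i+1)
          have hGr : G α (i+2) = ((i:ℝ)+1-α)/((i:ℝ)+2) * G α (i+1) := by
            have h2 : ((i:ℝ)+2) ≠ 0 := by positivity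
            field_simp at hrec ⊢
            push_cast at hrec
            linarith [hrec]
          have hcc : ((i:ℝ)+1-α)/((i:ℝ)+2) ≤ c := by
            rw [hcdef, div_le_div_iff₀ (by positivity) (by linarith)]
            nlinarith
          calc P α lam m * G α (i+1+1) = P α lam m * (((i:ℝ)+1-α)/((i:ℝ)+2) * G α (i+1)) := by
                rw [← hGr]
            _ ≤ P α lam m * (c * G α (i+1)) := by
                apply mul_le_mul_of_nonneg_left _ hPm
                apply mul_le_mul_of_nonneg_right hcc hGpos
            _ = c * (P α lam m * G α (i+1)) := by ring
      have hsum_le : ∑ m ∈ Finset.range M, P α lam m * G α (M+1-m) ≤ c * V α lam M := by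
        rw [V, Finset.mul_sum]
        exact Finset.sum_le_sum hratio
      -- combine
      have hVM1 : lam * V α lam (M+1) ≤ lam * (c * V α lam M) + lam * P α lam M * α := by
        rw [hsplit, G_one]
        have := mul_le_mul_of_nonneg_left hsum_le hl0.le
        nlinarith
      have hVM : lam * V α lam M = G α M - (1-lam) * P α lam M := by linarith [hPMeq]
      have hbracket : lam * α - (1 - lam) * c ≤ 0 := by
        have hMpos : (0:ℝ) < (M:ℝ) := by linarith
        have h1 : lam * ((M:ℝ)-1) * (1+α) ≤ ((M:ℝ)-1) * (1-α) := by
          have := mul_le_mul_of_nonneg_left hlam (by linarith : (0:ℝ) ≤ (M:ℝ)-1)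
          nlinarith
        have h2 : lam*α*(M:ℝ) ≤ (1-lam)*((M:ℝ)-1-α) := by
          nlinarith [mul_nonneg hα0.le (show (0:ℝ) ≤ (M:ℝ)-2 by linarith)]
        have h3 : (1-lam) * c = ((1-lam)*((M:ℝ)-1-α))/(M:ℝ) := by rw [hcdef]; ring
        rw [sub_nonpos, h3, le_div_iff₀ hMpos]
        exact h2
      have hGstep : c * G α M ≤ G α (M+1) := by
        have hGM : 0 ≤ G α M := G_nonneg hα0 hα1 M
        obtain ⟨i, hi⟩ : ∃ i, M = i + 1 := ⟨M - 1, by omega⟩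
        have hGr := G_rec (α := α) i
        have hji : ((i:ℝ)+2) ≠ 0 := by positivity
        have hGr2 : G α (i+2) = ((i:ℝ)+1-α)/((i:ℝ)+2) * G α (i+1) := by
          field_simp
          push_cast at hGr
          linarith [hGr]
        rw [hi, hGr2, hcdef, hi]
        push_cast
        rw [div_mul_eq_mul_div, div_mul_eq_mul_div, div_le_div_iff₀ (by positivity) (by positivity)]
        nlinarith [G_nonneg hα0 hα1 (i+1)]
      calc lam * V α lam (M+1) ≤ lam * (c * V α lam M) + lam * P α lam M * α := hVM1
        _ = P α lam M * (lam * α - (1-lam)*c) + c * G α M := by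
            have : lam * (c * V α lam M) = c * (lam * V α lam M) := by ring
            rw [this, hVM]
            ring
        _ ≤ c * G α M := by nlinarith
        _ ≤ G α (M+1) := hGstep

include hα0 hα1 hl0 hlam in
lemma P_nonneg : ∀ n, 0 ≤ P α lam n := by
  intro n
  cases n with
  | zero => rw [P_zero]
  | succ k =>
    rw [P_succ]
    have h1 : lam < 1 := lam_lt_one hα0 hl0 hlam
    have := key_invariant hα0 hα1 hl0 hlam (k+1)
    apply div_nonneg _ (by linarith)
    linarith

include hα0 hα1 hl0 hlam in
lemma P_le : ∀ n, P α lam n ≤ 1 / (1 - lam) := by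
  have h1 : lam < 1 := lam_lt_one hα0 hl0 hlam
  intro n
  cases n with
  | zero =>
    rw [P_zero]
    have h2 : 0 < 1 - lam := by linarith
    positivity
  | succ k =>
    rw [P_succ]
    have h2 := key_invariant hα0 hα1 hl0 hlam (k+1)
    have h3 := G_le_one hα0 hα1 (k+1)
    have hV0 : 0 ≤ V α lam (k+1) := by
      apply Finset.sum_nonneg
      intro m hm
      exact mul_nonneg (P_nonneg hα0 hα1 hl0 hlam m) (G_nonneg hα0 hα1 _)
    rw [div_le_div_iff₀ (by linarith) (by linarith)]
    nlinarith [mul_nonneg hl0.le hV0]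


include hα0 hα1 hl0 hlam in
lemma P_summable_pow {s : ℝ} (hs0 : 0 ≤ s) (hs1 : s < 1) :
    Summable (fun n => P α lam n * s ^ n) := by
  have h1 : lam < 1 := lam_lt_one hα0 hl0 hlam
  apply Summable.of_norm_bounded (g := fun n : ℕ => (1/(1-lam)) * s^n)
    ((summable_geometric_of_lt_one hs0 hs1).mul_left _)
  intro n
  rw [Real.norm_eq_abs, abs_mul, abs_of_nonneg (P_nonneg hα0 hα1 hl0 hlam n),
    abs_of_nonneg (pow_nonneg hs0 n)]
  apply mul_le_mul_of_nonneg_right (P_le hα0 hα1 hl0 hlam n) (pow_nonneg hs0 n)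

include hα0 hα1 hl0 hlam in
lemma coeff_id (n : ℕ) :
    (1-lam) * P α lam n + lam * ∑ k ∈ Finset.range (n+1), P α lam k * G α (n-k) = G α n := by
  have h1 : lam < 1 := lam_lt_one hα0 hl0 hlam
  cases n with
  | zero => simp [P_zero, G_zero]
  | succ n =>
    have hsum : ∑ k ∈ Finset.range (n+2), P α lam k * G α (n+1-k) = V α lam (n+1) := by
      rw [Finset.sum_range_succ]
      simp [G_zero, V]
    rw [hsum, P_succ]
    have h2 : (1:ℝ) - lam ≠ 0 := by linarith
    field_simp
    ring

include hα0 hα1 hl0 hlam in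
lemma cauchy_eq {s : ℝ} (hs0 : 0 ≤ s) (hs1 : s < 1) :
    (1 - lam * (1-s)^α) * (∑' n, P α lam n * s ^ n) = 1 - (1-s)^α := by
  have h1 : lam < 1 := lam_lt_one hα0 hl0 hlam
  have hys : |s| < 1 := by rw [abs_of_nonneg hs0]; exact hs1
  have hA : Summable (fun n => P α lam n * s ^ n) := P_summable_pow hα0 hα1 hl0 hlam hs0 hs1
  have hB : Summable (fun n => G α n * s ^ n) := F_summable hα0 hα1 hys
  have hA' : Summable (fun n => ‖P α lam n * s ^ n‖) := by
    rwa [summable_norm_iff]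
  have hB' : Summable (fun n => ‖G α n * s ^ n‖) := by
    rwa [summable_norm_iff]
  set A := ∑' n, P α lam n * s ^ n with hAdef
  set B := ∑' n, G α n * s ^ n with hBdef
  have hAB : A * B = ∑' n : ℕ, ∑ k ∈ Finset.range (n+1),
      (P α lam k * s ^ k) * (G α (n-k) * s ^ (n-k)) :=
    tsum_mul_tsum_eq_tsum_sum_range_of_summable_norm hA' hB'
  have hinner : ∀ n : ℕ, ∑ k ∈ Finset.range (n+1), (P α lam k * s ^ k) * (G α (n-k) * s ^ (n-k))
      = (∑ k ∈ Finset.range (n+1), P α lam k * G α (n-k)) * s ^ n := by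
    intro n
    rw [Finset.sum_mul]
    apply Finset.sum_congr rfl
    intro k hk
    rw [Finset.mem_range] at hk
    have hkn : k ≤ n := by omega
    have : s ^ k * s ^ (n-k) = s ^ n := by
      rw [← pow_add]
      congr 1
      omega
    linear_combination (P α lam k * G α (n-k)) * this
  have hABW : A * B = ∑' n : ℕ, (∑ k ∈ Finset.range (n+1), P α lam k * G α (n-k)) * s ^ n := by
    rw [hAB]
    exact tsum_congr hinner
  have hWval : ∀ n : ℕ, (∑ k ∈ Finset.range (n+1), P α lam k * G α (n-k)) * s ^ n
      = (1/lam) * ((G α n * s^n) - (1-lam) * (P α lam n * s^n)) := by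
    intro n
    have hc := coeff_id hα0 hα1 hl0 hlam n
    rw [one_div, inv_mul_eq_div, eq_div_iff hl0.ne']
    linear_combination (s^n) * hc
  have hW : Summable (fun n : ℕ => (∑ k ∈ Finset.range (n+1), P α lam k * G α (n-k)) * s ^ n) := by
    apply Summable.congr ((hB.sub (hA.mul_left (1-lam))).mul_left (1/lam))
    intro n
    exact (hWval n).symm
  have hmain : (1-lam) * A + lam * (A * B) = B := by
    rw [hABW, hAdef, ← tsum_mul_left, ← tsum_mul_left]
    rw [← Summable.tsum_add (hA.mul_left (1-lam)) (hW.mul_left lam)]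
    rw [hBdef]
    apply tsum_congr
    intro n
    have hc := coeff_id hα0 hα1 hl0 hlam n
    linear_combination (s^n) * hc
  have hBF : B = 1 - (1-s)^α := by
    rw [hBdef, ← F]
    have := binomial hα0 hα1 s hs0 hs1
    linarith
  have hden : 1 - lam * (1-s)^α = (1-lam) + lam * B := by
    rw [hBF]; ring
  rw [hden, ← hBF]
  nlinarith [hmain]

include hα0 hα1 hl0 hlam in
lemma Q_eq {s : ℝ} (hs0 : 0 ≤ s) (hs1 : s < 1) :
    (1 - (1-s)^α) / (1 - lam * (1-s)^α) = ∑' n, P α lam n * s ^ n := by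
  have h1 : lam < 1 := lam_lt_one hα0 hl0 hlam
  have hx1 : (1-s)^α ≤ 1 := Real.rpow_le_one (by linarith) (by linarith) hα0.le
  have hx0 : 0 < (1-s)^α := Real.rpow_pos_of_pos (by linarith) α
  have hden : 0 < 1 - lam * (1-s)^α := by nlinarith
  rw [div_eq_iff hden.ne']
  rw [mul_comm]
  exact (cauchy_eq hα0 hα1 hl0 hlam hs0 hs1).symm

include hα0 hα1 hl0 hlam in
lemma Q_le_one {s : ℝ} (hs0 : 0 ≤ s) (hs1 : s < 1) :
    (1 - (1-s)^α) / (1 - lam * (1-s)^α) ≤ 1 := by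
  have h1 : lam < 1 := lam_lt_one hα0 hl0 hlam
  have hx1 : (1-s)^α ≤ 1 := Real.rpow_le_one (by linarith) (by linarith) hα0.le
  have hx0 : 0 < (1-s)^α := Real.rpow_pos_of_pos (by linarith) α
  have hden : 0 < 1 - lam * (1-s)^α := by nlinarith
  rw [div_le_one hden]
  nlinarith

open Filter in
include hα0 hα1 hl0 hlam in
lemma partial_le_one (N : ℕ) : ∑ n ∈ Finset.range N, P α lam n ≤ 1 := by
  set c := ∑ n ∈ Finset.range N, P α lam n with hcdef
  have key : ∀ s : ℝ, s ∈ Set.Ioo (0:ℝ) 1 → c * s^N ≤ 1 := by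
    intro s hs
    have hs0 : (0:ℝ) ≤ s := hs.1.le
    have hs1 : s < 1 := hs.2
    have step1 : c * s^N ≤ ∑ n ∈ Finset.range N, P α lam n * s^n := by
      rw [hcdef, Finset.sum_mul]
      apply Finset.sum_le_sum
      intro n hn
      rw [Finset.mem_range] at hn
      apply mul_le_mul_of_nonneg_left _ (P_nonneg hα0 hα1 hl0 hlam n)
      exact pow_le_pow_of_le_one hs0 hs1.le hn.le
    have step2 : ∑ n ∈ Finset.range N, P α lam n * s^n ≤ ∑' n, P α lam n * s^n := by
      apply Summable.sum_le_tsum _ _ (P_summable_pow hα0 hα1 hl0 hlam hs0 hs1)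
      intro n _
      exact mul_nonneg (P_nonneg hα0 hα1 hl0 hlam n) (pow_nonneg hs0 n)
    have step3 : ∑' n, P α lam n * s^n ≤ 1 := by
      rw [← Q_eq hα0 hα1 hl0 hlam hs0 hs1]
      exact Q_le_one hα0 hα1 hl0 hlam hs0 hs1
    linarith
  have ht : Tendsto (fun s : ℝ => c * s^N) (nhdsWithin 1 (Set.Iio 1)) (nhds c) := by
    have h2 : Tendsto (fun s : ℝ => c * s^N) (nhds 1) (nhds (c * 1^N)) :=
      (continuous_const.mul (continuous_pow N)).tendsto 1
    rw [one_pow, mul_one] at h2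
    exact h2.mono_left nhdsWithin_le_nhds
  apply le_of_tendsto ht
  filter_upwards [Ioo_mem_nhdsLT_of_mem (show (1:ℝ) ∈ Set.Ioc (0:ℝ) 1 by norm_num)] with s hs
  exact key s hs

include hα0 hα1 hl0 hlam in
lemma P_summable : Summable (P α lam) :=
  summable_of_sum_range_le (P_nonneg hα0 hα1 hl0 hlam) (partial_le_one hα0 hα1 hl0 hlam)

include hα0 hα1 hl0 hlam in
lemma P_tsum : ∑' n, P α lam n = 1 := by
  have h1 : lam < 1 := lam_lt_one hα0 hl0 hlam
  have hsumm := P_summable hα0 hα1 hl0 hlam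
  have hle : ∑' n, P α lam n ≤ 1 :=
    Summable.tsum_le_of_sum_range_le hsumm (partial_le_one hα0 hα1 hl0 hlam)
  have hge : ∀ ε : ℝ, 0 < ε → ε < 1 → 1 - ε ≤ ∑' n, P α lam n := by
    intro ε hε0 hε1
    set s : ℝ := 1 - ε ^ (1/α) with hsdef
    have hxpos : 0 < ε ^ (1/α) := Real.rpow_pos_of_pos hε0 _
    have hxlt : ε ^ (1/α) < 1 := Real.rpow_lt_one hε0.le hε1 (by positivity)
    have hs0 : 0 ≤ s := by rw [hsdef]; linarith
    have hs1 : s < 1 := by rw [hsdef]; linarith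
    have hpow : (1 - s)^α = ε := by
      rw [hsdef]
      have : (1:ℝ) - (1 - ε ^ (1/α)) = ε ^ (1/α) := by ring
      rw [this, ← Real.rpow_mul hε0.le, one_div, inv_mul_cancel₀ hα0.ne', Real.rpow_one]
    have hQ : 1 - ε ≤ (1 - (1-s)^α) / (1 - lam * (1-s)^α) := by
      rw [hpow]
      have hden1 : 1 - lam * ε ≤ 1 := by nlinarith
      have hden0 : 0 < 1 - lam * ε := by nlinarith
      rw [le_div_iff₀ hden0]
      nlinarith
    have h2 : (1 - (1-s)^α) / (1 - lam * (1-s)^α) = ∑' n, P α lam n * s ^ n :=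
      Q_eq hα0 hα1 hl0 hlam hs0 hs1
    have h3 : ∑' n, P α lam n * s ^ n ≤ ∑' n, P α lam n := by
      apply Summable.tsum_le_tsum _ (P_summable_pow hα0 hα1 hl0 hlam hs0 hs1) hsumm
      intro n
      have hP := P_nonneg hα0 hα1 hl0 hlam n
      have : s ^ n ≤ 1 := pow_le_one₀ hs0 hs1.le
      nlinarith
    linarith
  by_contra hne
  have hlt : ∑' n, P α lam n < 1 := lt_of_le_of_ne hle hne
  have hT0 : 0 ≤ ∑' n, P α lam n := tsum_nonneg (P_nonneg hα0 hα1 hl0 hlam)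
  set T := ∑' n, P α lam n
  have := hge ((1-T)/2) (by linarith) (by linarith)
  linarith

end CS

/-- Christoph–Schreiber: for `0 < α ≤ 1` and `0 < λ ≤ (1-α)/(1+α)`, the quotient
`Q(s) = (1-(1-s)^α)/(1-λ(1-s)^α)` is a probability generating function. -/
theorem stmt2 (α lam : ℝ) (hα0 : 0 < α) (hα1 : α ≤ 1) (hl0 : 0 < lam)
    (hl1 : lam ≤ (1 - α) / (1 + α)) :
    IsPGF (fun s => (1 - (1 - s) ^ α) / (1 - lam * (1 - s) ^ α)) := by
  have hα1' : α < 1 := by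
    by_contra h
    push_neg at h
    have h2 : (1-α)/(1+α) ≤ 0 := by
      apply div_nonpos_of_nonpos_of_nonneg <;> linarith
    linarith
  have hlam : lam * (1+α) ≤ 1 - α := by
    rw [← le_div_iff₀ (by linarith : (0:ℝ) < 1+α)]
    exact hl1
  refine ⟨CS.P α lam, CS.P_nonneg hα0 hα1' hl0 hlam, CS.P_tsum hα0 hα1' hl0 hlam, ?_⟩
  intro s hs
  rcases eq_or_lt_of_le hs.2 with heq | hlt
  · subst heq
    show (1 - (1-(1:ℝ))^α) / (1 - lam * (1-(1:ℝ))^α) = ∑' n, CS.P α lam n * 1^n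
    simp only [show (1:ℝ)-1 = 0 from by norm_num, Real.zero_rpow hα0.ne', one_pow, mul_one]
    rw [CS.P_tsum hα0 hα1' hl0 hlam]
    norm_num
  · exact CS.Q_eq hα0 hα1' hl0 hlam hs.1 hlt
end

section
/- For 0 < α ≤ 1 and 0 < λ < 1, if the Sibuya(α, λ) distribution with PGF P(s) = 1 - λ(1-s)^α is infinitely divisible, then λ ≤ 1 - α. Conversely, if λ ≤ 1 - α then this distribution is infinitely divisible. -/
open MeasureTheory Set

section CSproof
open Filter Topology

namespace CS


noncomputable def Pf (α lam : ℝ) (s : ℝ) : ℝ := 1 - lam * (1 - s) ^ α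
noncomputable def Af (s : ℝ) : ℝ := (1 - s)⁻¹
noncomputable def Ff (α lam : ℝ) (s : ℝ) : ℝ := lam * α * (1 - s) ^ (α - 1) * (Pf α lam s)⁻¹
noncomputable def Wf (α lam : ℝ) (s : ℝ) : ℝ := (1 - α) * Af s - Ff α lam s
noncomputable def Qf (α lam : ℝ) (n : ℕ) (s : ℝ) : ℝ :=
  Real.exp (Real.log (Pf α lam s) * (n : ℝ)⁻¹)

/-- the left end of the domain of smoothness -/
noncomputable def cB (α lam : ℝ) : ℝ := 1 - lam ^ (-α⁻¹)

variable {α lam : ℝ}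

section basic

variable (hα0 : 0 < α) (hα1 : α ≤ 1) (hl0 : 0 < lam) (hl1 : lam < 1)

lemma cB_neg (hα0 : 0 < α) (hl0 : 0 < lam) (hl1 : lam < 1) : cB α lam < 0 := by
  have h1 : (1:ℝ) < lam ^ (-α⁻¹) := by
    rw [Real.one_lt_rpow_iff_of_pos hl0]
    exact Or.inr ⟨hl1, neg_lt_zero.mpr (inv_pos.mpr hα0)⟩
  simp only [cB]; linarith

lemma P_pos (hα0 : 0 < α) (hl0 : 0 < lam) {s : ℝ} (hs : s ∈ Ioo (cB α lam) 1) :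
    0 < Pf α lam s := by
  obtain ⟨h1, h2⟩ := hs
  have hu : 0 < 1 - s := by linarith
  have hub : 1 - s < lam ^ (-α⁻¹) := by simp only [cB] at h1; linarith
  have h3 : (1 - s) ^ α < (lam ^ (-α⁻¹)) ^ α := Real.rpow_lt_rpow hu.le hub hα0
  have h4 : (lam ^ (-α⁻¹)) ^ α = lam⁻¹ := by
    rw [← Real.rpow_mul hl0.le]
    have h5 : (-α⁻¹) * α = -1 := by field_simp
    rw [h5, Real.rpow_neg_one]
  rw [h4] at h3
  have h6 : lam * (1 - s) ^ α < 1 := by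
    have := (mul_lt_mul_iff_right₀ hl0).2 h3
    rwa [mul_inv_cancel₀ hl0.ne'] at this
  simp only [Pf]; linarith

lemma P_pos' (hα0 : 0 < α) (hl0 : 0 < lam) (hl1 : lam < 1) {s : ℝ} (hs : s ∈ Ico (0:ℝ) 1) :
    0 < Pf α lam s :=
  P_pos hα0 hl0 ⟨lt_of_lt_of_le (cB_neg hα0 hl0 hl1) hs.1, hs.2⟩

lemma Ico_subset_D (hα0 : 0 < α) (hl0 : 0 < lam) (hl1 : lam < 1) :
    Ico (0:ℝ) 1 ⊆ Ioo (cB α lam) 1 := fun s hs =>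
  ⟨lt_of_lt_of_le (cB_neg hα0 hl0 hl1) hs.1, hs.2⟩

lemma P_le_one (hα0 : 0 < α) (hl0 : 0 < lam) {s : ℝ} (hs : s ≤ 1) : Pf α lam s ≤ 1 := by
  have hu : (0:ℝ) ≤ 1 - s := by linarith
  have : 0 ≤ lam * (1 - s) ^ α := mul_nonneg hl0.le (Real.rpow_nonneg hu _)
  simp only [Pf]; linarith

end basic

section deriv

variable {s : ℝ} (hs1 : s < 1)

lemma hasDerivAt_P (hs1 : s < 1) :
    HasDerivAt (Pf α lam) (lam * α * (1 - s) ^ (α - 1)) s := by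
  have hu : (0:ℝ) < 1 - s := by linarith
  have h1 : HasDerivAt (fun x : ℝ => 1 - x) (-1) s := (hasDerivAt_id s).const_sub 1
  have h2 := h1.rpow_const (p := α) (Or.inl hu.ne')
  have h3 := (h2.const_mul lam).const_sub 1
  refine h3.congr_deriv ?_
  ring

lemma hasDerivAt_A (hs1 : s < 1) : HasDerivAt Af (Af s * Af s) s := by
  have hu : (0:ℝ) < 1 - s := by linarith
  have h1 : HasDerivAt (fun x : ℝ => 1 - x) (-1) s := (hasDerivAt_id s).const_sub 1
  have h2 := h1.inv hu.ne'
  refine h2.congr_deriv ?_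
  simp only [Af]
  field_simp

lemma hasDerivAt_logP (hs1 : s < 1) (hP : 0 < Pf α lam s) :
    HasDerivAt (fun x => Real.log (Pf α lam x)) (Ff α lam s) s := by
  have h := (hasDerivAt_P (α := α) (lam := lam) hs1).log hP.ne'
  exact h

lemma hasDerivAt_F (hs1 : s < 1) (hP : 0 < Pf α lam s) :
    HasDerivAt (Ff α lam) (Ff α lam s * Wf α lam s) s := by
  have hu : (0:ℝ) < 1 - s := by linarith
  have h1 : HasDerivAt (fun x : ℝ => 1 - x) (-1) s := (hasDerivAt_id s).const_sub 1
  have h2 := (h1.rpow_const (p := α - 1) (Or.inl hu.ne')).const_mul (lam * α)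
  have h3 := (hasDerivAt_P (α := α) (lam := lam) hs1).inv hP.ne'
  have h4 := h2.mul h3
  refine h4.congr_deriv ?_
  simp only [Ff, Wf, Af, Pf, Pi.inv_apply]
  have e1 : (1 - s) ^ (α - 1 - 1) = (1 - s) ^ (α - 1) * (1 - s)⁻¹ := by
    rw [show α - 1 - 1 = (α - 1) + (-1) by ring, Real.rpow_add hu, Real.rpow_neg_one]
  have e2 : (1 - s) ^ α = (1 - s) ^ (α - 1) * (1 - s) := by
    have h9 := Real.rpow_add hu (α - 1) 1
    rw [sub_add_cancel] at h9
    rw [h9, Real.rpow_one]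
  rw [e1]
  have hPne : (1 : ℝ) - lam * (1 - s) ^ α ≠ 0 := by simp only [Pf] at hP; linarith
  rw [e2] at hPne ⊢
  have hPne' : 1 - lam * (1 - s) * (1 - s) ^ (α - 1) ≠ 0 := fun h => hPne (by linarith)
  field_simp
  ring

lemma hasDerivAt_W (hs1 : s < 1) (hP : 0 < Pf α lam s) :
    HasDerivAt (Wf α lam)
      (α * (1 - α) * (Af s * Af s) + (1 - α) * (Af s * Wf α lam s)
        + Ff α lam s * Ff α lam s) s := by
  have h := ((hasDerivAt_A hs1).const_mul (1 - α)).sub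
    (hasDerivAt_F (α := α) (lam := lam) hs1 hP)
  refine h.congr_deriv ?_
  simp only [Wf]
  ring

lemma hasDerivAt_Q {n : ℕ} (hs1 : s < 1) (hP : 0 < Pf α lam s) :
    HasDerivAt (Qf α lam n) ((n : ℝ)⁻¹ * (Qf α lam n s * Ff α lam s)) s := by
  have h := ((hasDerivAt_logP (α := α) (lam := lam) hs1 hP).mul_const (n : ℝ)⁻¹).exp
  refine h.congr_deriv ?_
  simp only [Qf]
  ring

end deriv

section pos

variable (hα0 : 0 < α) (hα1 : α ≤ 1) (hl0 : 0 < lam) (hl1 : lam < 1)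

lemma A_pos {s : ℝ} (hs : s < 1) : 0 < Af s := by
  simp only [Af]; have : (0:ℝ) < 1 - s := by linarith
  positivity

lemma F_nonneg (hα0 : 0 < α) (hl0 : 0 < lam) {s : ℝ} (hs : s < 1) (hP : 0 < Pf α lam s) :
    0 ≤ Ff α lam s := by
  have hu : (0:ℝ) < 1 - s := by linarith
  have h1 : (0:ℝ) ≤ (1 - s) ^ (α - 1) := Real.rpow_nonneg hu.le _
  have : (0:ℝ) < (Pf α lam s)⁻¹ := by positivity
  simp only [Ff]
  positivity

lemma F_pos (hα0 : 0 < α) (hl0 : 0 < lam) {s : ℝ} (hs : s < 1) (hP : 0 < Pf α lam s) :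
    0 < Ff α lam s := by
  have hu : (0:ℝ) < 1 - s := by linarith
  have h1 : (0:ℝ) < (1 - s) ^ (α - 1) := Real.rpow_pos_of_pos hu _
  have : (0:ℝ) < (Pf α lam s)⁻¹ := by positivity
  simp only [Ff]
  positivity

lemma Wf_eq {s : ℝ} (hs : s < 1) (hP : 0 < Pf α lam s) :
    Wf α lam s = ((1 - α) - lam * (1 - s) ^ α) * ((1 - s) * Pf α lam s)⁻¹ := by
  have hu : (0:ℝ) < 1 - s := by linarith
  simp only [Wf, Af, Ff]
  have e2 : (1 - s) ^ α = (1 - s) ^ (α - 1) * (1 - s) := by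
    have h9 := Real.rpow_add hu (α - 1) 1
    rw [sub_add_cancel] at h9
    rw [h9, Real.rpow_one]
  have hPne : Pf α lam s ≠ 0 := hP.ne'
  simp only [Pf] at hPne ⊢
  rw [e2] at hPne ⊢
  have hPne' : 1 - (1 - s) * lam * (1 - s) ^ (α - 1) ≠ 0 := fun h => hPne (by linarith)
  field_simp
  ring

lemma W_nonneg (hα0 : 0 < α) (hα1 : α ≤ 1) (hl0 : 0 < lam) (hl1 : lam < 1)
    (hle : lam ≤ 1 - α) {s : ℝ} (hs : s ∈ Ico (0:ℝ) 1) :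
    0 ≤ Wf α lam s := by
  have hP := P_pos' hα0 hl0 hl1 hs
  have hu : (0:ℝ) < 1 - s := by have := hs.2; linarith
  rw [Wf_eq hs.2 hP]
  have h1 : (1 - s) ^ α ≤ 1 :=
    Real.rpow_le_one hu.le (by have := hs.1; linarith) hα0.le
  have h2 : lam * (1 - s) ^ α ≤ lam := by nlinarith
  have h3 : (0:ℝ) ≤ (1 - α) - lam * (1 - s) ^ α := by linarith
  have h4 : (0:ℝ) < ((1 - s) * Pf α lam s)⁻¹ := by positivity
  positivity

lemma Q_pos {n : ℕ} {s : ℝ} : 0 < Qf α lam n s := Real.exp_pos _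

lemma Q_le_one_s4 (hα0 : 0 < α) (hα1 : α ≤ 1) (hl0 : 0 < lam) (hl1 : lam < 1) {n : ℕ} {s : ℝ}
    (hs0 : 0 ≤ s) (hs : s ≤ 1) : Qf α lam n s ≤ 1 := by
  simp only [Qf]
  rw [Real.exp_le_one_iff]
  have hu : (0:ℝ) ≤ 1 - s := by linarith
  have hu1 : (1:ℝ) - s ≤ 1 := by linarith
  have h0 : lam * (1 - s) ^ α ≤ lam := by
    have := Real.rpow_le_one hu hu1 hα0.le
    nlinarith
  have h1 : Real.log (Pf α lam s) ≤ 0 :=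
    Real.log_nonpos (by simp only [Pf]; linarith) (P_le_one hα0 hl0 hs)
  exact mul_nonpos_of_nonpos_of_nonneg h1 (by positivity)

end pos


section cone

variable {n : ℕ}

inductive Cone (α lam : ℝ) (n : ℕ) : (ℝ → ℝ) → Prop
  | base_A : Cone α lam n Af
  | base_F : Cone α lam n (Ff α lam)
  | base_W : Cone α lam n (Wf α lam)
  | base_Q : Cone α lam n (Qf α lam n)
  | add {f g} : Cone α lam n f → Cone α lam n g → Cone α lam n (fun s => f s + g s)
  | mul {f g} : Cone α lam n f → Cone α lam n g → Cone α lam n (fun s => f s * g s)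
  | smul (c : ℝ) (hc : 0 ≤ c) {f} : Cone α lam n f → Cone α lam n (fun s => c * f s)

lemma cone_nonneg (hα0 : 0 < α) (hα1 : α ≤ 1) (hl0 : 0 < lam) (hl1 : lam < 1)
    (hle : lam ≤ 1 - α) {f : ℝ → ℝ} (hf : Cone α lam n f) :
    ∀ s ∈ Ico (0:ℝ) 1, 0 ≤ f s := by
  induction hf with
  | base_A => exact fun s hs => (A_pos hs.2).le
  | base_F => exact fun s hs => F_nonneg hα0 hl0 hs.2 (P_pos' hα0 hl0 hl1 hs)
  | base_W => exact fun s hs => W_nonneg hα0 hα1 hl0 hl1 hle hs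
  | base_Q => exact fun s hs => Q_pos.le
  | add _ _ ih1 ih2 => exact fun s hs => add_nonneg (ih1 s hs) (ih2 s hs)
  | mul _ _ ih1 ih2 => exact fun s hs => mul_nonneg (ih1 s hs) (ih2 s hs)
  | smul c hc _ ih => exact fun s hs => mul_nonneg hc (ih s hs)

lemma cone_deriv (hα0 : 0 < α) (hα1 : α ≤ 1) (hl0 : 0 < lam) {f : ℝ → ℝ}
    (hf : Cone α lam n f) :
    ∃ g, Cone α lam n g ∧ ∀ s ∈ Ioo (cB α lam) 1, HasDerivAt f (g s) s := by
  induction hf with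
  | base_A =>
    exact ⟨fun s => Af s * Af s, Cone.mul Cone.base_A Cone.base_A,
      fun s hs => hasDerivAt_A hs.2⟩
  | base_F =>
    exact ⟨fun s => Ff α lam s * Wf α lam s, Cone.mul Cone.base_F Cone.base_W,
      fun s hs => hasDerivAt_F hs.2 (P_pos hα0 hl0 hs)⟩
  | base_W =>
    refine ⟨fun s => α * (1 - α) * (Af s * Af s) + (1 - α) * (Af s * Wf α lam s)
      + Ff α lam s * Ff α lam s, ?_, fun s hs => hasDerivAt_W hs.2 (P_pos hα0 hl0 hs)⟩
    exact Cone.add (Cone.add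
      (Cone.smul _ (mul_nonneg hα0.le (by linarith)) (Cone.mul Cone.base_A Cone.base_A))
      (Cone.smul _ (by linarith) (Cone.mul Cone.base_A Cone.base_W)))
      (Cone.mul Cone.base_F Cone.base_F)
  | base_Q =>
    exact ⟨fun s => (n : ℝ)⁻¹ * (Qf α lam n s * Ff α lam s),
      Cone.smul _ (by positivity) (Cone.mul Cone.base_Q Cone.base_F),
      fun s hs => hasDerivAt_Q hs.2 (P_pos hα0 hl0 hs)⟩
  | add _ _ ih1 ih2 =>
    obtain ⟨g1, hg1, hd1⟩ := ih1
    obtain ⟨g2, hg2, hd2⟩ := ih2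
    exact ⟨fun s => g1 s + g2 s, Cone.add hg1 hg2, fun s hs => (hd1 s hs).add (hd2 s hs)⟩
  | mul h1 h2 ih1 ih2 =>
    obtain ⟨g1, hg1, hd1⟩ := ih1
    obtain ⟨g2, hg2, hd2⟩ := ih2
    exact ⟨_, Cone.add (Cone.mul hg1 h2) (Cone.mul h1 hg2),
      fun s hs => (hd1 s hs).mul (hd2 s hs)⟩
  | smul c hc h ih =>
    obtain ⟨g1, hg1, hd1⟩ := ih
    exact ⟨fun s => c * g1 s, Cone.smul c hc hg1, fun s hs => (hd1 s hs).const_mul c⟩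

lemma iteratedDeriv_Q_cone (hα0 : 0 < α) (hα1 : α ≤ 1) (hl0 : 0 < lam) (k : ℕ) :
    ∃ g, Cone α lam n g ∧ ∀ s ∈ Ioo (cB α lam) 1, iteratedDeriv k (Qf α lam n) s = g s := by
  induction k with
  | zero => exact ⟨Qf α lam n, Cone.base_Q, fun s _ => by simp [iteratedDeriv_zero]⟩
  | succ k ih =>
    obtain ⟨g, hg, heq⟩ := ih
    obtain ⟨g', hg', hd⟩ := cone_deriv hα0 hα1 hl0 hg
    refine ⟨g', hg', fun s hs => ?_⟩
    have hev : iteratedDeriv k (Qf α lam n) =ᶠ[𝓝 s] g :=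
      Filter.eventually_of_mem (isOpen_Ioo.mem_nhds hs) (fun t ht => heq t ht)
    rw [iteratedDeriv_succ, hev.deriv_eq]
    exact (hd s hs).deriv

lemma iteratedDeriv_Q_hasDeriv (hα0 : 0 < α) (hα1 : α ≤ 1) (hl0 : 0 < lam) (k : ℕ) :
    ∀ s ∈ Ioo (cB α lam) 1,
      HasDerivAt (iteratedDeriv k (Qf α lam n)) (iteratedDeriv (k + 1) (Qf α lam n) s) s := by
  intro s hs
  obtain ⟨g, hg, heq⟩ := iteratedDeriv_Q_cone (n := n) hα0 hα1 hl0 k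
  obtain ⟨g', hg', hd⟩ := cone_deriv hα0 hα1 hl0 hg
  have hev : g =ᶠ[𝓝 s] iteratedDeriv k (Qf α lam n) :=
    Filter.eventually_of_mem (isOpen_Ioo.mem_nhds hs) (fun t ht => (heq t ht).symm)
  have hD : HasDerivAt (iteratedDeriv k (Qf α lam n)) (g' s) s :=
    (hd s hs).congr_of_eventuallyEq hev.symm
  have : iteratedDeriv (k + 1) (Qf α lam n) s = g' s := by
    rw [iteratedDeriv_succ, hev.symm.deriv_eq]
    exact (hd s hs).deriv
  rw [this]
  exact hD

lemma iteratedDeriv_Q_nonneg (hα0 : 0 < α) (hα1 : α ≤ 1) (hl0 : 0 < lam) (hl1 : lam < 1)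
    (hle : lam ≤ 1 - α) (k : ℕ) :
    ∀ s ∈ Ico (0:ℝ) 1, 0 ≤ iteratedDeriv k (Qf α lam n) s := by
  intro s hs
  obtain ⟨g, hg, heq⟩ := iteratedDeriv_Q_cone (n := n) hα0 hα1 hl0 k
  rw [heq s (Ico_subset_D hα0 hl0 hl1 hs)]
  exact cone_nonneg hα0 hα1 hl0 hl1 hle hg s hs

lemma iteratedDerivWithin_Q_eq (hα0 : 0 < α) (hα1 : α ≤ 1) (hl0 : 0 < lam) (hl1 : lam < 1)
    {a b : ℝ} (ha : 0 ≤ a) (hab : a < b) (hb : b < 1) (k : ℕ) :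
    ∀ t ∈ Icc a b, iteratedDerivWithin k (Qf α lam n) (Icc a b) t
      = iteratedDeriv k (Qf α lam n) t := by
  have hsub : Icc a b ⊆ Ioo (cB α lam) 1 := fun t ht =>
    ⟨lt_of_lt_of_le (cB_neg hα0 hl0 hl1) (le_trans ha ht.1), lt_of_le_of_lt ht.2 hb⟩
  induction k with
  | zero => intro t _; simp
  | succ k ih =>
    intro t ht
    have hu := (uniqueDiffOn_Icc hab) t ht
    rw [iteratedDerivWithin_succ, derivWithin_congr (fun u hu' => ih u hu') (ih t ht),
      DifferentiableAt.derivWithin ?_ hu, ← iteratedDeriv_succ]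
    exact (iteratedDeriv_Q_hasDeriv hα0 hα1 hl0 k t (hsub ht)).differentiableAt

lemma iteratedDeriv_Q_monotoneOn (hα0 : 0 < α) (hα1 : α ≤ 1) (hl0 : 0 < lam) (hl1 : lam < 1)
    (hle : lam ≤ 1 - α) {a b : ℝ} (ha : 0 ≤ a) (hb : b < 1) (k : ℕ) :
    MonotoneOn (iteratedDeriv k (Qf α lam n)) (Icc a b) := by
  have hsub : Icc a b ⊆ Ioo (cB α lam) 1 := fun t ht =>
    ⟨lt_of_lt_of_le (cB_neg hα0 hl0 hl1) (le_trans ha ht.1), lt_of_le_of_lt ht.2 hb⟩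
  apply monotoneOn_of_deriv_nonneg (convex_Icc a b)
  · exact fun t ht => (iteratedDeriv_Q_hasDeriv hα0 hα1 hl0 k t (hsub ht)).continuousAt.continuousWithinAt
  · intro t ht
    rw [interior_Icc] at ht
    exact (iteratedDeriv_Q_hasDeriv hα0 hα1 hl0 k t (hsub (Ioo_subset_Icc_self ht))).differentiableAt.differentiableWithinAt
  · intro t ht
    rw [interior_Icc] at ht
    rw [(iteratedDeriv_Q_hasDeriv hα0 hα1 hl0 k t (hsub (Ioo_subset_Icc_self ht))).deriv]
    exact iteratedDeriv_Q_nonneg hα0 hα1 hl0 hl1 hle (k + 1) t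
      ⟨le_trans ha ht.1.le, lt_trans ht.2 hb⟩

lemma contDiffOn_Q (hα0 : 0 < α) (hl0 : 0 < lam) (m : ℕ∞) :
    ContDiffOn ℝ m (Qf α lam n) (Ioo (cB α lam) 1) := by
  intro s hs
  apply ContDiffAt.contDiffWithinAt
  have hu : (0:ℝ) < 1 - s := by have := hs.2; linarith
  have hP := P_pos hα0 hl0 hs
  have h1 : ContDiffAt ℝ m (fun x : ℝ => 1 - x) s := (contDiff_const.sub contDiff_id).contDiffAt
  have h2 : ContDiffAt ℝ m (fun y : ℝ => y ^ α) (1 - s) :=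
    Real.contDiffAt_rpow_const_of_ne hu.ne'
  have h3 : ContDiffAt ℝ m (fun x : ℝ => (1 - x) ^ α) s := h2.comp s h1
  have h4 : ContDiffAt ℝ m (Pf α lam) s := contDiffAt_const.sub (contDiffAt_const.mul h3)
  have h5 : ContDiffAt ℝ m (fun x => Real.log (Pf α lam x)) s := h4.log hP.ne'
  have h6 : ContDiffAt ℝ m (fun x => Real.log (Pf α lam x) * (n:ℝ)⁻¹) s := h5.mul contDiffAt_const
  exact h6.exp

end cone

section taylor

variable {n : ℕ}

/-- Key bound on iterated derivatives via Taylor-Lagrange. -/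
lemma Q_iteratedDeriv_bound (hα0 : 0 < α) (hα1 : α ≤ 1) (hl0 : 0 < lam) (hl1 : lam < 1)
    (hle : lam ≤ 1 - α) {r : ℝ} (hr0 : 0 < r) (hr1 : r < 1) (k : ℕ) {ξ : ℝ}
    (hξ0 : 0 ≤ ξ) (hξr : ξ < r) :
    iteratedDeriv (k + 1) (Qf α lam n) ξ
      ≤ (Qf α lam n r - Qf α lam n 0) * (k + 1).factorial / (r - ξ) ^ (k + 1) := by
  set g := Qf α lam n with hg
  have hsub : Icc ξ r ⊆ Ioo (cB α lam) 1 := fun t ht =>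
    ⟨lt_of_lt_of_le (cB_neg hα0 hl0 hl1) (le_trans hξ0 ht.1), lt_of_le_of_lt ht.2 hr1⟩
  have hcd : ContDiffOn ℝ k g (Icc ξ r) := (contDiffOn_Q hα0 hl0 k).mono hsub
  have hiw := iteratedDerivWithin_Q_eq (n := n) hα0 hα1 hl0 hl1 hξ0 hξr hr1
  have hdiff : DifferentiableOn ℝ (iteratedDerivWithin k g (Icc ξ r)) (Ioo ξ r) := by
    apply DifferentiableOn.congr (f := iteratedDeriv k g)
    · intro t ht
      exact (iteratedDeriv_Q_hasDeriv hα0 hα1 hl0 k t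
        (hsub (Ioo_subset_Icc_self ht))).differentiableAt.differentiableWithinAt
    · exact fun t ht => hiw k t (Ioo_subset_Icc_self ht)
  obtain ⟨ζ, hζ, hrem⟩ := taylor_mean_remainder_lagrange (f := g) hξr.ne
    (by rwa [uIcc_of_le hξr.le]) (by rwa [uIcc_of_le hξr.le, uIoo_of_le hξr.le])
  rw [uIoo_of_le hξr.le] at hζ
  rw [uIcc_of_le hξr.le] at hrem
  -- `taylorWithinEval ≥ g ξ`
  have hTay : g ξ ≤ taylorWithinEval g k (Icc ξ r) ξ r := by
    rw [taylor_within_apply]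
    have h0m : (0 : ℕ) ∈ Finset.range (k + 1) := by simp
    have := Finset.single_le_sum (f := fun i =>
        ((i.factorial : ℝ)⁻¹ * (r - ξ) ^ i) • iteratedDerivWithin i g (Icc ξ r) ξ)
      (fun i _ => ?_) h0m
    · simpa [iteratedDerivWithin_zero] using this
    · rw [hiw i ξ (left_mem_Icc.mpr hξr.le), smul_eq_mul]
      have h1 : (0:ℝ) ≤ iteratedDeriv i g ξ :=
        iteratedDeriv_Q_nonneg hα0 hα1 hl0 hl1 hle i ξ ⟨hξ0, lt_trans hξr hr1⟩
      have h2 : (0:ℝ) ≤ (r - ξ) ^ i := pow_nonneg (by linarith) i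
      have h3 : (0:ℝ) ≤ ((i.factorial : ℝ))⁻¹ := by positivity
      exact mul_nonneg (mul_nonneg h3 h2) h1
  have hmono := iteratedDeriv_Q_monotoneOn (n := n) hα0 hα1 hl0 hl1 hle
      (a := 0) (b := r) le_rfl hr1
  -- monotonicity of `g` itself
  have hgmono : g ξ - g 0 ≥ 0 := by
    have h := iteratedDeriv_Q_monotoneOn (n := n) hα0 hα1 hl0 hl1 hle
      (a := 0) (b := r) le_rfl hr1 (k := 0)
    simp only [iteratedDeriv_zero] at h
    have := h (left_mem_Icc.mpr (le_trans hξ0 hξr.le)) ⟨hξ0, hξr.le⟩ hξ0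
    linarith
  have hζr : iteratedDerivWithin (k + 1) g (Icc ξ r) ζ = iteratedDeriv (k + 1) g ζ :=
    hiw (k + 1) ζ (Ioo_subset_Icc_self hζ)
  rw [hζr] at hrem
  have hC : iteratedDeriv (k + 1) g ζ * (r - ξ) ^ (k + 1) / (k + 1).factorial
      ≤ g r - g 0 := by
    rw [← hrem]
    linarith [hTay]
  have hmle : iteratedDeriv (k + 1) g ξ ≤ iteratedDeriv (k + 1) g ζ :=
    hmono (k := k + 1) ⟨hξ0, hξr.le⟩ ⟨le_trans hξ0 hζ.1.le, hζ.2.le⟩ hζ.1.le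
  have hpow : (0:ℝ) < (r - ξ) ^ (k + 1) := by
    have : (0:ℝ) < r - ξ := by linarith
    positivity
  have hfac : (0:ℝ) < ((k + 1).factorial : ℝ) := by positivity
  rw [ge_iff_le, ← sub_nonneg] at hgmono
  rw [le_div_iff₀ hpow]
  calc iteratedDeriv (k + 1) g ξ * (r - ξ) ^ (k + 1)
      ≤ iteratedDeriv (k + 1) g ζ * (r - ξ) ^ (k + 1) := by
        apply mul_le_mul_of_nonneg_right hmle hpow.le
    _ ≤ (g r - g 0) * (k + 1).factorial := by
        rw [div_le_iff₀ hfac] at hC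
        linarith
  done

end taylor

lemma Q_hasSum (hα0 : 0 < α) (hα1 : α ≤ 1) (hl0 : 0 < lam) (hl1 : lam < 1)
    (hle : lam ≤ 1 - α) {s : ℝ} (hs : s ∈ Ico (0:ℝ) 1) :
    HasSum (fun k => iteratedDeriv k (Qf α lam n) 0 / (k.factorial : ℝ) * s ^ k)
      (Qf α lam n s) := by
  have hc : ∀ k, 0 ≤ iteratedDeriv k (Qf α lam n) 0 / (k.factorial : ℝ) := fun k =>
    div_nonneg (iteratedDeriv_Q_nonneg hα0 hα1 hl0 hl1 hle k 0 ⟨le_rfl, one_pos⟩)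
      (by positivity)
  have hterm : ∀ k, 0 ≤ iteratedDeriv k (Qf α lam n) 0 / (k.factorial : ℝ) * s ^ k :=
    fun k => mul_nonneg (hc k) (pow_nonneg hs.1 k)
  rcases eq_or_lt_of_le hs.1 with h0 | h0
  · rw [← h0]
    have h := hasSum_single (f := fun k =>
      iteratedDeriv k (Qf α lam n) 0 / (k.factorial : ℝ) * (0:ℝ) ^ k) 0
      (fun b hb => by simp [zero_pow hb])
    convert h using 1
    simp [iteratedDeriv_zero]
  · -- 0 < s
    set r : ℝ := (1 + s) / 2 with hr_def
    have hr0 : 0 < r := by rw [hr_def]; linarith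
    have hsr : s < r := by rw [hr_def]; linarith [hs.2]
    have hr1 : r < 1 := by rw [hr_def]; linarith [hs.2]
    set g := Qf α lam n with hg_def
    set c : ℕ → ℝ := fun k => iteratedDeriv k g 0 / (k.factorial : ℝ) with hc_def
    have hsub : Icc (0:ℝ) s ⊆ Ioo (cB α lam) 1 := fun t ht =>
      ⟨lt_of_lt_of_le (cB_neg hα0 hl0 hl1) ht.1, lt_of_le_of_lt ht.2 hs.2⟩
    have hiw := iteratedDerivWithin_Q_eq (n := n) hα0 hα1 hl0 hl1 (le_refl (0:ℝ)) h0 hs.2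
    have hT : ∀ k : ℕ, taylorWithinEval g k (Icc 0 s) 0 s
        = ∑ i ∈ Finset.range (k + 1), c i * s ^ i := by
      intro k
      rw [taylor_within_apply]
      refine Finset.sum_congr rfl (fun i _ => ?_)
      rw [hiw i 0 (left_mem_Icc.mpr h0.le), smul_eq_mul, hc_def]
      dsimp only
      rw [sub_zero]
      ring
    have hcdiff : ∀ k : ℕ, ContDiffOn ℝ k g (Icc 0 s) := fun k =>
      (contDiffOn_Q hα0 hl0 k).mono hsub
    have hdiff : ∀ k : ℕ, DifferentiableOn ℝ (iteratedDerivWithin k g (Icc 0 s)) (Ioo 0 s) := by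
      intro k
      apply DifferentiableOn.congr (f := iteratedDeriv k g)
      · intro t ht
        exact (iteratedDeriv_Q_hasDeriv hα0 hα1 hl0 k t
          (hsub (Ioo_subset_Icc_self ht))).differentiableAt.differentiableWithinAt
      · exact fun t ht => hiw k t (Ioo_subset_Icc_self ht)
    -- remainder is nonnegative
    have hR0 : ∀ k : ℕ, 0 ≤ g s - ∑ i ∈ Finset.range (k + 1), c i * s ^ i := by
      intro k
      obtain ⟨ξ, hξ, hrem⟩ := taylor_mean_remainder_lagrange (f := g) (n := k) h0.ne
        (by rw [uIcc_of_le h0.le]; exact hcdiff k)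
        (by rw [uIcc_of_le h0.le, uIoo_of_le h0.le]; exact hdiff k)
      rw [uIoo_of_le h0.le] at hξ
      rw [uIcc_of_le h0.le] at hrem
      rw [hT k] at hrem
      rw [hrem, hiw (k + 1) ξ (Ioo_subset_Icc_self hξ)]
      have h1 : 0 ≤ iteratedDeriv (k + 1) g ξ :=
        iteratedDeriv_Q_nonneg hα0 hα1 hl0 hl1 hle (k + 1) ξ
          ⟨hξ.1.le, lt_trans hξ.2 hs.2⟩
      have h2 : (0:ℝ) ≤ (s - 0) ^ (k + 1) := by rw [sub_zero]; positivity
      positivity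
    -- upper bound on the remainder
    have hC0 : 0 ≤ g r - g 0 := by
      have h := iteratedDeriv_Q_monotoneOn (n := n) hα0 hα1 hl0 hl1 hle
        (a := 0) (b := r) le_rfl hr1 (k := 0)
      simp only [iteratedDeriv_zero] at h
      have := h (left_mem_Icc.mpr hr0.le) (right_mem_Icc.mpr hr0.le) hr0.le
      linarith
    set C : ℝ := g r - g 0 with hC_def
    have hRb : ∀ k : ℕ, g s - ∑ i ∈ Finset.range (k + 1), c i * s ^ i
        ≤ (C * s * (r - s)⁻¹) * ((k + 1) * (s / r) ^ k) := by
      intro k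
      obtain ⟨ξ, hξ, hrem⟩ := taylor_mean_remainder_cauchy (f := g) (n := k) h0.ne
        (by rw [uIcc_of_le h0.le]; exact hcdiff k)
        (by rw [uIcc_of_le h0.le, uIoo_of_le h0.le]; exact hdiff k)
      rw [uIoo_of_le h0.le] at hξ
      rw [uIcc_of_le h0.le] at hrem
      rw [hT k] at hrem
      rw [hrem, hiw (k + 1) ξ (Ioo_subset_Icc_self hξ), sub_zero]
      have hξ0 : 0 ≤ ξ := hξ.1.le
      have hξs : ξ < s := hξ.2
      have hξr : ξ < r := lt_trans hξs hsr
      have hbound := Q_iteratedDeriv_bound (n := n) hα0 hα1 hl0 hl1 hle hr0 hr1 k hξ0 hξr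
      rw [← hg_def, ← hC_def] at hbound
      have hfac : (0:ℝ) < (k.factorial : ℝ) := by positivity
      have hrest : (0:ℝ) ≤ (s - ξ) ^ k / (k.factorial : ℝ) * s := by
        have : (0:ℝ) ≤ (s - ξ) ^ k := pow_nonneg (by linarith) k
        positivity
      calc iteratedDeriv (k + 1) g ξ * (s - ξ) ^ k / (k.factorial : ℝ) * s
          = iteratedDeriv (k + 1) g ξ * ((s - ξ) ^ k / (k.factorial : ℝ) * s) := by ring
        _ ≤ (C * ((k+1).factorial : ℝ) / (r - ξ) ^ (k + 1))
              * ((s - ξ) ^ k / (k.factorial : ℝ) * s) :=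
            mul_le_mul_of_nonneg_right hbound hrest
        _ = (C * (k + 1) * s) * (((s - ξ) / (r - ξ)) ^ k * (r - ξ)⁻¹) := by
            have hrξ : (0:ℝ) < r - ξ := by linarith
            rw [div_pow, Nat.factorial_succ]
            push_cast
            field_simp
            ring
        _ ≤ (C * (k + 1) * s) * ((s / r) ^ k * (r - s)⁻¹) := by
            apply mul_le_mul_of_nonneg_left _ (by positivity)
            have hrξ : (0:ℝ) < r - ξ := by linarith
            have hrs : (0:ℝ) < r - s := by linarith
            have hdivle : (s - ξ) / (r - ξ) ≤ s / r := by
              rw [div_le_div_iff₀ hrξ hr0]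
              nlinarith [mul_le_mul_of_nonneg_left hsr.le hξ0]
            have h1 : ((s - ξ) / (r - ξ)) ^ k ≤ (s / r) ^ k :=
              pow_le_pow_left₀ (div_nonneg (by linarith) hrξ.le) hdivle k
            have h2 : (r - ξ)⁻¹ ≤ (r - s)⁻¹ := by
              apply inv_anti₀ hrs
              linarith
            exact mul_le_mul h1 h2 (by positivity) (pow_nonneg (div_nonneg hs.1 hr0.le) k)
        _ = (C * s * (r - s)⁻¹) * ((k + 1) * (s / r) ^ k) := by ring
    -- the bound tends to zero
    have hq0 : (0:ℝ) ≤ s / r := div_nonneg hs.1 hr0.le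
    have hq1 : s / r < 1 := (div_lt_one hr0).mpr hsr
    have htend0 : Filter.Tendsto (fun k : ℕ => ((k:ℝ) + 1) * (s / r) ^ k)
        Filter.atTop (nhds 0) := by
      have h1 : Filter.Tendsto (fun k : ℕ => (k:ℝ) * (s / r) ^ k) Filter.atTop (nhds 0) := by
        have hsum := summable_pow_mul_geometric_of_norm_lt_one (R := ℝ) 1
          (r := s / r) (by rw [Real.norm_eq_abs, abs_of_nonneg hq0]; exact hq1)
        have := hsum.tendsto_atTop_zero
        simpa [pow_one] using this
      have h2 : Filter.Tendsto (fun k : ℕ => (s / r) ^ k) Filter.atTop (nhds 0) :=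
        tendsto_pow_atTop_nhds_zero_of_lt_one hq0 hq1
      have := h1.add h2
      simp only [add_zero] at this
      exact this.congr (fun k => by ring)
    have htendb : Filter.Tendsto (fun k : ℕ => (C * s * (r - s)⁻¹) * (((k:ℝ) + 1) * (s / r) ^ k))
        Filter.atTop (nhds 0) := by
      have := htend0.const_mul (C * s * (r - s)⁻¹)
      simpa using this
    have hRtend : Filter.Tendsto
        (fun k : ℕ => g s - ∑ i ∈ Finset.range (k + 1), c i * s ^ i)
        Filter.atTop (nhds 0) := by
      apply squeeze_zero hR0 _ htendb
      intro k
      have := hRb k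
      push_cast at this ⊢
      exact this
    have hPartial : Filter.Tendsto (fun k : ℕ => ∑ i ∈ Finset.range (k + 1), c i * s ^ i)
        Filter.atTop (nhds (g s)) := by
      have := Filter.Tendsto.sub (tendsto_const_nhds (x := g s) (f := Filter.atTop)) hRtend
      simp only [sub_zero] at this
      exact this.congr (fun k => by ring)
    rw [hasSum_iff_tendsto_nat_of_nonneg hterm]
    rw [← tendsto_add_atTop_iff_nat 1]
    exact hPartial

lemma P_tendsto_one (hα0 : 0 < α) :
    Filter.Tendsto (Pf α lam) (nhdsWithin 1 (Iio 1)) (nhds 1) := by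
  have h1 : Filter.Tendsto (fun s : ℝ => 1 - s) (nhdsWithin 1 (Iio 1)) (nhds 0) := by
    have hc : Continuous (fun s : ℝ => 1 - s) := continuous_const.sub continuous_id
    have := (hc.tendsto (1:ℝ)).mono_left (nhdsWithin_le_nhds (s := Iio 1))
    simpa using this
  have h2 : ContinuousAt (fun x : ℝ => x ^ α) 0 :=
    Real.continuousAt_rpow_const 0 α (Or.inr hα0.le)
  have h3 : Filter.Tendsto (fun s : ℝ => (1 - s) ^ α) (nhdsWithin 1 (Iio 1))
      (nhds ((0:ℝ) ^ α)) := (h2.tendsto).comp h1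
  rw [Real.zero_rpow hα0.ne'] at h3
  have h4 := (h3.const_mul lam).const_sub 1
  rw [mul_zero, sub_zero] at h4
  exact h4

lemma Q_tendsto_one (hα0 : 0 < α) {n : ℕ} :
    Filter.Tendsto (Qf α lam n) (nhdsWithin 1 (Iio 1)) (nhds 1) := by
  have hP := P_tendsto_one (lam := lam) hα0
  have hlog : Filter.Tendsto (fun s => Real.log (Pf α lam s)) (nhdsWithin 1 (Iio 1))
      (nhds 0) := by
    have hcont : ContinuousAt Real.log 1 := Real.continuousAt_log one_ne_zero
    have := hcont.tendsto.comp hP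
    rw [Real.log_one] at this; exact this
  have h5 := hlog.mul_const (n:ℝ)⁻¹
  rw [zero_mul] at h5
  have := (Real.continuous_exp.tendsto 0).comp h5
  rw [Real.exp_zero] at this; exact this

lemma sufficiency (hα0 : 0 < α) (hα1 : α ≤ 1) (hl0 : 0 < lam) (hl1 : lam < 1)
    (hle : lam ≤ 1 - α) : IsIDPGF (Pf α lam) := by
  intro n hn
  set q : ℕ → ℝ := fun k => iteratedDeriv k (Qf α lam n) 0 / (k.factorial : ℝ) with hq_def
  have hq0 : ∀ k, 0 ≤ q k := fun k =>
    div_nonneg (iteratedDeriv_Q_nonneg hα0 hα1 hl0 hl1 hle k 0 ⟨le_rfl, one_pos⟩)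
      (by positivity)
  have hHS : ∀ s ∈ Ico (0:ℝ) 1, HasSum (fun k => q k * s ^ k) (Qf α lam n s) :=
    fun s hs => Q_hasSum hα0 hα1 hl0 hl1 hle hs
  -- partial sums bounded by 1
  have hpartial : ∀ m : ℕ, ∑ i ∈ Finset.range m, q i ≤ 1 := by
    intro m
    have hcont : Filter.Tendsto (fun s : ℝ => ∑ i ∈ Finset.range m, q i * s ^ i)
        (nhdsWithin 1 (Iio 1)) (nhds (∑ i ∈ Finset.range m, q i * 1 ^ i)) := by
      apply Filter.Tendsto.mono_left _ nhdsWithin_le_nhds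
      exact (Continuous.tendsto (by continuity) 1)
    have hev : ∀ᶠ s in nhdsWithin (1:ℝ) (Iio 1),
        ∑ i ∈ Finset.range m, q i * s ^ i ≤ 1 := by
      filter_upwards [Ioo_mem_nhdsLT_of_mem (show (1:ℝ) ∈ Ioc 0 1 by constructor <;> norm_num)]
        with s hs
      calc ∑ i ∈ Finset.range m, q i * s ^ i
          ≤ Qf α lam n s := sum_le_hasSum _ (fun i _ => mul_nonneg (hq0 i)
            (pow_nonneg hs.1.le i)) (hHS s ⟨hs.1.le, hs.2⟩)
        _ ≤ 1 := Q_le_one_s4 hα0 hα1 hl0 hl1 hs.1.le hs.2.le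
    have := le_of_tendsto hcont hev
    simpa using this
  have hsum : Summable q := summable_of_sum_range_le hq0 hpartial
  have htsum_le : ∑' k, q k ≤ 1 := Real.tsum_le_of_sum_range_le hq0 hpartial
  have htsum_ge : 1 ≤ ∑' k, q k := by
    have hev : ∀ᶠ s in nhdsWithin (1:ℝ) (Iio 1), Qf α lam n s ≤ ∑' k, q k := by
      filter_upwards [Ioo_mem_nhdsLT_of_mem (show (1:ℝ) ∈ Ioc 0 1 by constructor <;> norm_num)]
        with s hs
      have h1 := hHS s ⟨hs.1.le, hs.2⟩
      rw [← h1.tsum_eq]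
      apply Summable.tsum_le_tsum _ h1.summable hsum
      intro k
      calc q k * s ^ k ≤ q k * 1 := by
            apply mul_le_mul_of_nonneg_left _ (hq0 k)
            exact pow_le_one₀ hs.1.le hs.2.le
        _ = q k := mul_one _
    exact le_of_tendsto (Q_tendsto_one hα0) hev
  have htsum : ∑' k, q k = 1 := le_antisymm htsum_le htsum_ge
  refine ⟨fun s => ∑' k, q k * s ^ k, ⟨q, hq0, htsum, fun s _ => rfl⟩, ?_⟩
  intro s hs
  rcases lt_or_eq_of_le hs.2 with hlt | heq
  · have h1 := (hHS s ⟨hs.1, hlt⟩).tsum_eq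
    dsimp only
    rw [h1]
    have hP := P_pos' hα0 hl0 hl1 ⟨hs.1, hlt⟩
    simp only [Qf]
    rw [← Real.exp_nat_mul]
    have : (n:ℝ) * (Real.log (Pf α lam s) * (n:ℝ)⁻¹) = Real.log (Pf α lam s) := by
      field_simp
    rw [this, Real.exp_log hP]
  · subst heq
    have h2 : ∑' k, q k * (1:ℝ) ^ k = 1 := by simpa using htsum
    dsimp only
    rw [h2, one_pow]
    simp [Pf, Real.zero_rpow hα0.ne']

open Filter in
lemma root_tendsto_log {x : ℝ} (hx : 0 < x) :
    Tendsto (fun n : ℕ => (n:ℝ) * (x ^ ((n:ℝ)⁻¹) - 1)) atTop (𝓝 (Real.log x)) := by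
  set c := Real.log x with hc_def
  have hxc : ∀ n : ℕ, x ^ ((n:ℝ)⁻¹) = Real.exp (c * (n:ℝ)⁻¹) := fun n => by
    rw [Real.rpow_def_of_pos hx]
  rcases eq_or_ne c 0 with hc | hc
  · have hx1 : x = 1 := by
      have := Real.exp_log hx
      rw [← hc_def, hc, Real.exp_zero] at this
      exact this.symm
    subst hx1
    simp only [Real.one_rpow, sub_self, mul_zero, Real.log_one]
    rw [hc]
    exact tendsto_const_nhds
  · have hslope : Tendsto (fun t : ℝ => (Real.exp t - 1) / t) (nhdsWithin 0 {0}ᶜ) (𝓝 1) := by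
      have h := hasDerivAt_iff_tendsto_slope.mp (Real.hasDerivAt_exp 0)
      rw [Real.exp_zero] at h
      exact h.congr fun t => by rw [slope_def_field, Real.exp_zero, sub_zero]
    have hcn : Tendsto (fun n : ℕ => c * (n:ℝ)⁻¹) atTop (nhdsWithin 0 {0}ᶜ) := by
      apply tendsto_nhdsWithin_of_tendsto_nhds_of_eventually_within
      · have := tendsto_const_div_atTop_nhds_zero_nat c
        exact this.congr fun n => by rw [div_eq_mul_inv]
      · filter_upwards [eventually_gt_atTop 0] with m hm
        have hmne : ((m:ℝ)) ≠ 0 := Nat.cast_ne_zero.mpr hm.ne'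
        exact mul_ne_zero hc (inv_ne_zero hmne)
    have hcomp : Tendsto (fun n : ℕ => (Real.exp (c * (n:ℝ)⁻¹) - 1) / (c * (n:ℝ)⁻¹))
        atTop (𝓝 1) := hslope.comp hcn
    have hmul := hcomp.mul_const c
    rw [one_mul] at hmul
    apply hmul.congr'
    filter_upwards [eventually_gt_atTop 0] with m hm
    have hmne : ((m:ℝ)) ≠ 0 := Nat.cast_ne_zero.mpr hm.ne'
    rw [hxc m]
    field_simp

lemma necessity (hα0 : 0 < α) (hα1 : α ≤ 1) (hl0 : 0 < lam) (hl1 : lam < 1)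
    (hID : IsIDPGF (Pf α lam)) : lam ≤ 1 - α := by
  by_contra hgt
  push_neg at hgt  -- 1 - α < lam
  -- Step 1: each n-th root of P is convex on [0,1]
  have hconv : ∀ n : ℕ, 0 < n →
      ConvexOn ℝ (Icc (0:ℝ) 1) (fun z => (Pf α lam z) ^ ((n:ℝ)⁻¹)) := by
    intro n hn
    obtain ⟨Q, ⟨p, hp0, hps, hpeq⟩, hpow⟩ := hID n hn
    have hsummable : Summable p := by
      by_contra hns
      rw [tsum_eq_zero_of_not_summable hns] at hps
      norm_num at hps
    have hQnonneg : ∀ z ∈ Icc (0:ℝ) 1, 0 ≤ Q z := by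
      intro z hz
      rw [hpeq z hz]
      exact tsum_nonneg fun k => mul_nonneg (hp0 k) (pow_nonneg hz.1 k)
    have hQP : ∀ z ∈ Icc (0:ℝ) 1, (Pf α lam z) ^ ((n:ℝ)⁻¹) = Q z := by
      intro z hz
      rw [hpow z hz]
      exact Real.pow_rpow_inv_natCast (hQnonneg z hz) hn.ne'
    have hsummx : ∀ z ∈ Icc (0:ℝ) 1, Summable (fun k => p k * z ^ k) := by
      intro z hz
      apply Summable.of_nonneg_of_le (fun k => mul_nonneg (hp0 k) (pow_nonneg hz.1 k))
        (fun k => ?_) hsummable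
      calc p k * z ^ k ≤ p k * 1 :=
            mul_le_mul_of_nonneg_left (pow_le_one₀ hz.1 hz.2) (hp0 k)
        _ = p k := mul_one _
    have hconvQ : ConvexOn ℝ (Icc (0:ℝ) 1) Q := by
      refine ⟨convex_Icc _ _, ?_⟩
      intro x hx y hy a b ha hb hab
      have hmix : a • x + b • y ∈ Icc (0:ℝ) 1 := (convex_Icc (0:ℝ) 1) hx hy ha hb hab
      rw [hpeq _ hx, hpeq _ hy, hpeq _ hmix]
      simp only [smul_eq_mul] at *
      have hterm : ∀ k, p k * (a * x + b * y) ^ k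
          ≤ a * (p k * x ^ k) + b * (p k * y ^ k) := by
        intro k
        have h := (convexOn_pow k).2 (mem_Ici.mpr hx.1) (mem_Ici.mpr hy.1) ha hb hab
        simp only [smul_eq_mul] at h
        calc p k * (a * x + b * y) ^ k ≤ p k * (a * x ^ k + b * y ^ k) :=
              mul_le_mul_of_nonneg_left h (hp0 k)
          _ = a * (p k * x ^ k) + b * (p k * y ^ k) := by ring
      calc ∑' k, p k * (a * x + b * y) ^ k
          ≤ ∑' k, (a * (p k * x ^ k) + b * (p k * y ^ k)) := by
            apply Summable.tsum_le_tsum hterm (hsummx _ hmix)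
            exact ((hsummx _ hx).mul_left a).add ((hsummx _ hy).mul_left b)
        _ = a * ∑' k, p k * x ^ k + b * ∑' k, p k * y ^ k := by
            rw [Summable.tsum_add ((hsummx _ hx).mul_left a) ((hsummx _ hy).mul_left b),
              tsum_mul_left, tsum_mul_left]
    refine ⟨convex_Icc _ _, ?_⟩
    intro x hx y hy a b ha hb hab
    have hmix : a • x + b • y ∈ Icc (0:ℝ) 1 := (convex_Icc (0:ℝ) 1) hx hy ha hb hab
    have h := hconvQ.2 hx hy ha hb hab
    rwa [← hQP _ hx, ← hQP _ hy, ← hQP _ hmix] at h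
  -- Step 2: log ∘ P is convex on [0,1)
  have hL : ConvexOn ℝ (Ico (0:ℝ) 1) (fun z => Real.log (Pf α lam z)) := by
    refine ⟨convex_Ico _ _, ?_⟩
    intro x hx y hy a b ha hb hab
    have hmix : a • x + b • y ∈ Ico (0:ℝ) 1 := (convex_Ico (0:ℝ) 1) hx hy ha hb hab
    have hlim : ∀ z ∈ Ico (0:ℝ) 1, Filter.Tendsto
        (fun m : ℕ => (m:ℝ) * ((Pf α lam z) ^ ((m:ℝ)⁻¹) - 1)) Filter.atTop
        (𝓝 (Real.log (Pf α lam z))) := fun z hz =>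
      root_tendsto_log (P_pos' hα0 hl0 hl1 hz)
    have hineq : ∀ m : ℕ, 0 < m →
        (m:ℝ) * ((Pf α lam (a • x + b • y)) ^ ((m:ℝ)⁻¹) - 1)
        ≤ a * ((m:ℝ) * ((Pf α lam x) ^ ((m:ℝ)⁻¹) - 1))
          + b * ((m:ℝ) * ((Pf α lam y) ^ ((m:ℝ)⁻¹) - 1)) := by
      intro m hm
      have h := (hconv m hm).2 (Ico_subset_Icc_self hx) (Ico_subset_Icc_self hy) ha hb hab
      simp only [smul_eq_mul] at h ⊢
      have hm0 : (0:ℝ) ≤ (m:ℝ) := Nat.cast_nonneg m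
      have h2 := mul_le_mul_of_nonneg_left h hm0
      nlinarith [h2, hab]
    have htend : Filter.Tendsto (fun m : ℕ =>
        a * ((m:ℝ) * ((Pf α lam x) ^ ((m:ℝ)⁻¹) - 1))
        + b * ((m:ℝ) * ((Pf α lam y) ^ ((m:ℝ)⁻¹) - 1))
        - (m:ℝ) * ((Pf α lam (a • x + b • y)) ^ ((m:ℝ)⁻¹) - 1)) Filter.atTop
        (𝓝 (a * Real.log (Pf α lam x) + b * Real.log (Pf α lam y)
          - Real.log (Pf α lam (a • x + b • y)))) :=
      (((hlim x hx).const_mul a).add ((hlim y hy).const_mul b)).sub (hlim _ hmix)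
    have hnonneg : 0 ≤ a * Real.log (Pf α lam x) + b * Real.log (Pf α lam y)
        - Real.log (Pf α lam (a • x + b • y)) := by
      apply ge_of_tendsto htend
      filter_upwards [Filter.eventually_gt_atTop 0] with m hm
      have := hineq m hm
      linarith
    simp only [smul_eq_mul] at *
    linarith
  -- Step 3: construct the interval where F is strictly decreasing
  set t : ℝ := (1 - α) / lam with ht_def
  have ht0 : 0 ≤ t := div_nonneg (by linarith) hl0.le
  have ht1 : t < 1 := (div_lt_one hl0).mpr hgt
  set u₀ : ℝ := ((t + 1) / 2) ^ (α⁻¹ : ℝ) with hu₀_def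
  have htm : 0 < (t + 1) / 2 := by linarith
  have htm1 : (t + 1) / 2 < 1 := by linarith
  have hu₀0 : 0 < u₀ := Real.rpow_pos_of_pos htm _
  have hu₀1 : u₀ < 1 := Real.rpow_lt_one htm.le htm1 (by positivity)
  have hu₀α : u₀ ^ α = (t + 1) / 2 := Real.rpow_inv_rpow htm.le hα0.ne'
  set s₁ : ℝ := 1 - u₀ with hs₁_def
  have hs₁0 : 0 < s₁ := by simp only [hs₁_def]; linarith
  have hs₁1 : s₁ < 1 := by simp only [hs₁_def]; linarith
  -- W < 0 on (0, s₁]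
  have hWneg : ∀ z, 0 < z → z ≤ s₁ → Wf α lam z < 0 := by
    intro z hz0 hzs
    have hz1 : z < 1 := lt_of_le_of_lt hzs hs₁1
    have hP := P_pos' hα0 hl0 hl1 ⟨hz0.le, hz1⟩
    rw [Wf_eq hz1 hP]
    have hu : u₀ ≤ 1 - z := by simp only [hs₁_def] at hzs; linarith
    have h1 : u₀ ^ α ≤ (1 - z) ^ α := Real.rpow_le_rpow hu₀0.le hu hα0.le
    rw [hu₀α] at h1
    have h2 : 1 - α < lam * ((1 - z) ^ α) := by
      have : lam * t < lam * ((t + 1) / 2) := by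
        apply mul_lt_mul_of_pos_left _ hl0
        linarith
      have hlt : lam * t = 1 - α := by
        rw [ht_def]
        field_simp
      nlinarith
    have h3 : (1 - α) - lam * (1 - z) ^ α < 0 := by linarith
    have h4 : (0:ℝ) < ((1 - z) * Pf α lam z)⁻¹ := by
      have : (0:ℝ) < 1 - z := by linarith
      positivity
    exact mul_neg_of_neg_of_pos h3 h4
  set aa : ℝ := s₁ / 2 with haa_def
  set bb : ℝ := 3 * s₁ / 4 with hbb_def
  have haa0 : 0 < aa := by simp only [haa_def]; linarith
  have hab' : aa < bb := by simp only [haa_def, hbb_def]; linarith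
  have hbb1 : bb < 1 := by simp only [hbb_def]; linarith
  have hbbs : bb ≤ s₁ := by simp only [hbb_def]; linarith
  -- F is strictly decreasing on [aa, bb]
  have hanti : StrictAntiOn (Ff α lam) (Icc aa bb) := by
    apply strictAntiOn_of_deriv_neg (convex_Icc aa bb)
    · intro z hz
      have hz1 : z < 1 := lt_of_le_of_lt hz.2 hbb1
      have hP := P_pos' hα0 hl0 hl1 ⟨le_trans haa0.le hz.1, hz1⟩
      exact (hasDerivAt_F hz1 hP).continuousAt.continuousWithinAt
    · intro z hz
      rw [interior_Icc] at hz
      have hz0 : 0 < z := lt_trans haa0 hz.1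
      have hz1 : z < 1 := lt_trans hz.2 hbb1
      have hP := P_pos' hα0 hl0 hl1 ⟨hz0.le, hz1⟩
      rw [(hasDerivAt_F hz1 hP).deriv]
      exact mul_neg_of_pos_of_neg (F_pos hα0 hl0 hz1 hP)
        (hWneg z hz0 (le_trans hz.2.le hbbs))
  -- monotonicity of F from convexity of log P
  have haaI : aa ∈ Ico (0:ℝ) 1 := ⟨haa0.le, lt_trans (lt_of_lt_of_le hab' hbbs) hs₁1⟩
  have hbbI : bb ∈ Ico (0:ℝ) 1 := ⟨le_trans haa0.le hab'.le, hbb1⟩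
  have hda : HasDerivAt (fun z => Real.log (Pf α lam z)) (Ff α lam aa) aa :=
    hasDerivAt_logP haaI.2 (P_pos' hα0 hl0 hl1 haaI)
  have hdb : HasDerivAt (fun z => Real.log (Pf α lam z)) (Ff α lam bb) bb :=
    hasDerivAt_logP hbbI.2 (P_pos' hα0 hl0 hl1 hbbI)
  have hle1 : Ff α lam aa ≤ slope (fun z => Real.log (Pf α lam z)) aa bb :=
    hL.le_slope_of_hasDerivAt haaI hbbI hab' hda
  have hle2 : slope (fun z => Real.log (Pf α lam z)) aa bb ≤ Ff α lam bb :=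
    hL.slope_le_of_hasDerivAt haaI hbbI hab' hdb
  have hmono : Ff α lam aa ≤ Ff α lam bb := le_trans hle1 hle2
  have hstrict : Ff α lam bb < Ff α lam aa :=
    hanti (left_mem_Icc.mpr hab'.le) (right_mem_Icc.mpr hab'.le) hab'
  linarith

end CS

end CSproof

/-- Christoph–Schreiber: for `0 < α ≤ 1`, `0 < λ < 1`, the Sibuya(α,λ) law with PGF
`P(s) = 1 - λ(1-s)^α` is infinitely divisible iff `λ ≤ 1 - α`. -/
theorem stmt4 (α lam : ℝ) (hα0 : 0 < α) (hα1 : α ≤ 1) (hl0 : 0 < lam) (hl1 : lam < 1) :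
    IsIDPGF (fun s => 1 - lam * (1 - s) ^ α) ↔ lam ≤ 1 - α := by
  constructor
  · intro h
    exact CS.necessity hα0 hα1 hl0 hl1 h
  · intro h
    exact CS.sufficiency hα0 hα1 hl0 hl1 h
end

section
/- There exist a characteristic function φ on ℝ, a constant b ∈ (0,1), and a characteristic function φ_0 such that φ(t) = φ(bt)·φ_0(t) for all t ∈ ℝ, yet φ is not the characteristic function of an infinitely divisible distribution. -/
open MeasureTheory Set

noncomputable def unif : Measure ℝ := (2⁻¹ : ENNReal) • (volume.restrict (Icc (-1:ℝ) 1))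

noncomputable def bern : Measure ℝ :=
  (2⁻¹ : ENNReal) • (Measure.dirac (-(2⁻¹:ℝ)) + Measure.dirac (2⁻¹:ℝ))

instance : IsProbabilityMeasure unif := by
  constructor
  simp [unif, Real.volume_Icc]
  rw [show ENNReal.ofReal (1+1) = 2 by norm_num, ENNReal.inv_mul_cancel] <;> norm_num

instance : IsProbabilityMeasure bern := by
  constructor
  simp [bern]
  rw [ENNReal.inv_two_add_inv_two]

open Complex in
lemma cf_unif (t : ℝ) (ht : t ≠ 0) : cf unif t = Complex.sin t / t := by
  have htC : (t:ℂ) ≠ 0 := Complex.ofReal_ne_zero.mpr ht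
  have htI : (t:ℂ) * I ≠ 0 := mul_ne_zero htC I_ne_zero
  rw [cf, unif, integral_smul_measure]
  rw [MeasureTheory.integral_Icc_eq_integral_Ioc,
    ← intervalIntegral.integral_of_le (by norm_num : (-1:ℝ) ≤ 1)]
  simp_rw [show ∀ x:ℝ, (t:ℂ) * x * I = ((t:ℂ)*I) * x from fun x => by ring]
  rw [integral_exp_mul_complex htI]
  rw [Complex.sin]
  push_cast
  rw [show ((2:ENNReal)⁻¹).toReal = (2:ℝ)⁻¹ by simp]
  field_simp
  ring_nf
  simp [Complex.I_sq]
  linear_combination (-(I * cexp (↑t * I)) + I * cexp (-(↑t * I))) * (mul_inv_cancel₀ htC)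

lemma integrable_cexp (ν : Measure ℝ) [IsFiniteMeasure ν] (t : ℝ) :
    Integrable (fun x : ℝ => Complex.exp (t * x * Complex.I)) ν := by
  apply Integrable.mono' (integrable_const 1)
  · apply Continuous.aestronglyMeasurable
    fun_prop
  · filter_upwards with x
    rw [Complex.norm_exp]
    simp

open Complex in
lemma cf_bern (t : ℝ) : cf bern t = Complex.cos (t/2) := by
  rw [cf, bern, integral_smul_measure,
    integral_add_measure (integrable_cexp _ t) (integrable_cexp _ t),
    integral_dirac, integral_dirac]
  rw [show ((2:ENNReal)⁻¹).toReal = (2:ℝ)⁻¹ by simp]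
  rw [Complex.cos]
  push_cast
  rw [Complex.real_smul]
  push_cast
  ring_nf

open Complex in
lemma normSq_cf (μ : Measure ℝ) [IsProbabilityMeasure μ] (t : ℝ) :
    ‖cf μ t‖^2 = ∫ z : ℝ × ℝ, Real.cos (t * (z.1 - z.2)) ∂(μ.prod μ) := by
  have hconj : (starRingEnd ℂ) (cf μ t) = ∫ y, Complex.exp ((t:ℂ) * (-y) * I) ∂μ := by
    rw [cf, ← integral_conj]
    congr 1
    funext y
    rw [← Complex.exp_conj]
    congr 1
    simp [map_mul, Complex.conj_I]
  have hprod : cf μ t * (starRingEnd ℂ) (cf μ t)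
      = ∫ z : ℝ × ℝ, Complex.exp (↑(t * (z.1 - z.2)) * I) ∂(μ.prod μ) := by
    rw [hconj, cf, ← integral_prod_mul (fun x : ℝ => Complex.exp ((t:ℂ) * x * I))
      (fun y : ℝ => Complex.exp ((t:ℂ) * (-y) * I))]
    congr 1
    funext z
    rw [← Complex.exp_add]
    congr 1
    push_cast
    ring
  have hint : Integrable (fun z : ℝ × ℝ => Complex.exp (↑(t * (z.1 - z.2)) * I)) (μ.prod μ) := by
    apply Integrable.mono' (integrable_const 1)
    · apply Continuous.aestronglyMeasurable
      fun_prop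
    · filter_upwards with z
      rw [Complex.norm_exp]
      simp
  have h1 : ‖cf μ t‖^2 = (cf μ t * (starRingEnd ℂ) (cf μ t)).re := by
    rw [Complex.mul_conj]
    simp [Complex.normSq_eq_norm_sq, ← Complex.ofReal_pow]
  rw [h1, hprod, ← RCLike.re_to_complex, ← integral_re hint]
  congr 1
  funext z
  simpa using Complex.exp_ofReal_mul_I_re (t * (z.1 - z.2))

lemma integrable_cos_prod (μ : Measure ℝ) [IsProbabilityMeasure μ] (t : ℝ) :
    Integrable (fun z : ℝ × ℝ => Real.cos (t * (z.1 - z.2))) (μ.prod μ) := by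
  apply Integrable.mono' (integrable_const 1)
  · apply Continuous.aestronglyMeasurable
    fun_prop
  · filter_upwards with z
    rw [Real.norm_eq_abs]
    exact Real.abs_cos_le_one _

lemma cf_ineq (μ : Measure ℝ) [IsProbabilityMeasure μ] (s : ℝ) :
    1 - ‖cf μ (2*s)‖^2 ≤ 4 * (1 - ‖cf μ s‖^2) := by
  rw [normSq_cf, normSq_cf]
  have h2 := integrable_cos_prod μ (2*s)
  have h1 := integrable_cos_prod μ s
  have key : ∫ z : ℝ × ℝ, (1 - Real.cos ((2*s) * (z.1 - z.2))) ∂(μ.prod μ)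
      ≤ ∫ z : ℝ × ℝ, 4 * (1 - Real.cos (s * (z.1 - z.2))) ∂(μ.prod μ) := by
    apply integral_mono ((integrable_const 1).sub h2) (((integrable_const 1).sub h1).const_mul 4)
    intro z
    have hc := Real.cos_two_mul (s * (z.1 - z.2))
    have h3 : Real.cos (2*s*(z.1-z.2)) = Real.cos (2*(s*(z.1-z.2))) := by ring_nf
    have := Real.cos_le_one (s * (z.1 - z.2))
    have := Real.neg_one_le_cos (s * (z.1 - z.2))
    simp only [Pi.sub_apply]
    nlinarith
  rw [integral_sub (integrable_const 1) h2, integral_const_mul,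
    integral_sub (integrable_const 1) h1, integral_const] at key
  simpa using key

/-- There are a characteristic function `φ`, a constant `b ∈ (0,1)` and a
characteristic function `φ₀` with `φ(t) = φ(bt)·φ₀(t)` for all `t`, yet `φ` is not
the characteristic function of an infinitely divisible law. -/
theorem stmt12 :
    ∃ (φ φ₀ : ℝ → ℂ) (b : ℝ), IsCF φ ∧ IsCF φ₀ ∧ 0 < b ∧ b < 1 ∧
      (∀ t : ℝ, φ t = φ (b * t) * φ₀ t) ∧ ¬ IsIDCF φ := by
  refine ⟨cf unif, cf bern, 2⁻¹, ⟨unif, inferInstance, rfl⟩, ⟨bern, inferInstance, rfl⟩,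
    by norm_num, by norm_num, ?_, ?_⟩
  · intro t
    rcases eq_or_ne t 0 with rfl | ht
    · rw [mul_zero, cf_bern]
      norm_num
    · have ht2 : 2⁻¹ * t ≠ 0 := by simp [ht]
      have htC : (t:ℂ) ≠ 0 := Complex.ofReal_ne_zero.mpr ht
      have hcos : (((2:ℝ)⁻¹*t:ℝ):ℂ) = (t:ℂ)/2 := by push_cast; ring
      have h2 : (t:ℂ)/2 ≠ 0 := by simp [htC]
      have hs : Complex.sin (t:ℂ) = 2 * Complex.sin ((t:ℂ)/2) * Complex.cos ((t:ℂ)/2) := by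
        have h := Complex.sin_two_mul ((t:ℂ)/2)
        rw [show 2*((t:ℂ)/2) = (t:ℂ) by ring] at h
        exact h
      rw [cf_unif t ht, cf_unif _ ht2, cf_bern, hcos, hs]
      field_simp
  · intro hID
    obtain ⟨ψ, ⟨ν, hν, rfl⟩, hψ⟩ := hID 4 (by norm_num)
    have hpi0 : cf unif Real.pi = 0 := by
      rw [cf_unif _ Real.pi_ne_zero, ← Complex.ofReal_sin]
      simp [Real.sin_pi]
    have hzero : cf ν Real.pi = 0 := by
      have h := (hψ Real.pi).symm.trans hpi0
      exact pow_eq_zero_iff (by norm_num) |>.mp h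
    have hval : cf unif (Real.pi/2) = ((2/Real.pi : ℝ) : ℂ) := by
      have hne : Real.pi/2 ≠ 0 := by positivity
      rw [cf_unif _ hne, ← Complex.ofReal_sin, Real.sin_pi_div_two]
      push_cast
      rw [div_div_eq_mul_div, one_mul]
    have hy0 : (0:ℝ) ≤ ‖cf ν (Real.pi/2)‖^2 := sq_nonneg _
    have hnorm : (‖cf ν (Real.pi/2)‖^2)^2 = 2/Real.pi := by
      have h4 : cf ν (Real.pi/2)^4 = ((2/Real.pi:ℝ):ℂ) := (hψ _).symm.trans hval
      have h5 : ‖cf ν (Real.pi/2)‖^4 = ‖((2/Real.pi:ℝ):ℂ)‖ := by rw [← norm_pow, h4]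
      have h6 : ‖((2/Real.pi:ℝ):ℂ)‖ = 2/Real.pi := by
        rw [Complex.norm_real, Real.norm_eq_abs, abs_of_pos (by positivity)]
      rw [← pow_mul]
      rw [h6] at h5
      exact h5
    have hineq := cf_ineq ν (Real.pi/2)
    rw [show 2*(Real.pi/2) = Real.pi by ring, hzero] at hineq
    simp only [norm_zero] at hineq
    have hπ : Real.pi < 3.15 := Real.pi_lt_d2
    have hπ0 : (3:ℝ) < Real.pi := Real.pi_gt_three
    have h2 : (‖cf ν (Real.pi/2)‖^2)^2 * Real.pi = 2 := by
      rw [hnorm]; field_simp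
    nlinarith [hineq, h2, hy0]
end

section
/- There exist a probability generating function P of a distribution on {0,1,2,...}, a constant c ∈ (0,1), and a probability generating function P_0 such that P(s) = P(1-c+cs)·P_0(s) for all s ∈ (0,1), yet the distribution with PGF P is not infinitely divisible. -/
open MeasureTheory Set

/-! ### Auxiliary material: the Sibuya(1/2) distribution -/

/-- Coefficients of `1 - √(1-s)`: `p₀ = 0`, `pₙ = catalan (n-1) / (2·4^(n-1))`. -/
noncomputable def sibuya : ℕ → ℝ
  | 0 => 0
  | (m+1) => (catalan m : ℝ) / (2 * 4 ^ m)

lemma sibuya_nonneg (n : ℕ) : 0 ≤ sibuya n := by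
  cases n with
  | zero => simp [sibuya]
  | succ m => exact div_nonneg (Nat.cast_nonneg _) (by positivity)

lemma sibuya_one : sibuya 1 = 1 / 2 := by simp [sibuya]

/-- central binomial identity: `cb(n+1) + 2·catalan n = 4·cb n`. -/
lemma cb_catalan (n : ℕ) :
    Nat.centralBinom (n+1) + 2 * catalan n = 4 * Nat.centralBinom n := by
  have h1 := Nat.succ_mul_centralBinom_succ n
  have h2 := succ_mul_catalan_eq_centralBinom n
  have key : (n+1) * (Nat.centralBinom (n+1) + 2 * catalan n) = (n+1) * (4 * Nat.centralBinom n) := by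
    calc (n+1) * (Nat.centralBinom (n+1) + 2 * catalan n)
        = (n+1) * Nat.centralBinom (n+1) + 2 * ((n+1) * catalan n) := by ring
      _ = 2 * (2*n+1) * Nat.centralBinom n + 2 * Nat.centralBinom n := by rw [h1, h2]
      _ = (n+1) * (4 * Nat.centralBinom n) := by ring
  exact Nat.eq_of_mul_eq_mul_left (Nat.succ_pos n) key

/-- `g n = cb n / 4^n`, the telescoping sequence. -/
noncomputable def gseq (n : ℕ) : ℝ := (Nat.centralBinom n : ℝ) / 4 ^ n

lemma gseq_nonneg (n : ℕ) : 0 ≤ gseq n := div_nonneg (Nat.cast_nonneg _) (by positivity)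

lemma gseq_zero : gseq 0 = 1 := by simp [gseq, Nat.centralBinom]

lemma sibuya_telescope (n : ℕ) : sibuya (n+1) = gseq n - gseq (n+1) := by
  have h := cb_catalan n
  have h' : (Nat.centralBinom (n+1) : ℝ) + 2 * (catalan n : ℝ) = 4 * Nat.centralBinom n := by
    exact_mod_cast congrArg (Nat.cast : ℕ → ℝ) h
  have h4 : (4:ℝ) ^ n ≠ 0 := by positivity
  have step : gseq n - gseq (n+1)
      = (4 * (Nat.centralBinom n : ℝ) - Nat.centralBinom (n+1)) / (4 ^ n * 4) := by
    rw [gseq, gseq, pow_succ]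
    field_simp
  have step2 : (4 * (Nat.centralBinom n : ℝ) - Nat.centralBinom (n+1)) = 2 * catalan n := by
    linarith
  rw [step, step2]
  show (catalan n : ℝ) / (2 * 4 ^ n) = 2 * (catalan n : ℝ) / (4 ^ n * 4)
  field_simp
  ring


lemma sibuya_sum_range_le (N : ℕ) : ∑ i ∈ Finset.range N, sibuya i ≤ 1 := by
  cases N with
  | zero => simp
  | succ K =>
    rw [Finset.sum_range_succ']
    simp only [sibuya_telescope]
    rw [Finset.sum_range_sub' gseq K]
    have := gseq_nonneg K
    simp [sibuya, gseq_zero]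
    linarith [gseq_nonneg K, gseq_zero ▸ (le_refl (gseq 0))]

lemma sibuya_summable : Summable sibuya :=
  summable_of_sum_range_le sibuya_nonneg sibuya_sum_range_le

/-- catalan is monotone. -/
lemma catalan_le_catalan_succ (n : ℕ) : catalan n ≤ catalan (n+1) := by
  rw [catalan_succ' n]
  have hmem : ((n, 0) : ℕ × ℕ) ∈ Finset.HasAntidiagonal.antidiagonal n := by simp
  calc catalan n = catalan n * catalan 0 := by simp
    _ ≤ ∑ ij ∈ Finset.HasAntidiagonal.antidiagonal n, catalan ij.1 * catalan ij.2 :=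
        Finset.single_le_sum (f := fun ij => catalan ij.1 * catalan ij.2)
          (fun i _ => Nat.zero_le _) hmem

/-- the Catalan convolution identity for the sibuya coefficients. -/
lemma sibuya_conv (N : ℕ) :
    ∑ kl ∈ Finset.HasAntidiagonal.antidiagonal N, sibuya kl.1 * sibuya kl.2
      = 2 * sibuya N - (if N = 1 then 1 else 0) := by
  rw [Finset.Nat.sum_antidiagonal_eq_sum_range_succ (fun i j => sibuya i * sibuya j) N]
  match N with
  | 0 => simp [sibuya]
  | 1 =>
    simp [Finset.sum_range_succ, sibuya]
  | (m+2) =>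
    rw [Finset.sum_range_succ', Finset.sum_range_succ]
    simp only [Nat.sub_self, show sibuya 0 = 0 from rfl, mul_zero, zero_mul, add_zero]
    have hstep : ∀ i ∈ Finset.range (m+1),
        sibuya (i+1) * sibuya (m+2 - (i+1)) =
          (catalan i : ℝ) * (catalan (m - i) : ℝ) / (4 * 4 ^ m) := by
      intro i hi
      have him : i ≤ m := Nat.lt_succ_iff.mp (Finset.mem_range.mp hi)
      have : m + 2 - (i+1) = (m - i) + 1 := by omega
      rw [this]
      simp only [sibuya]
      rw [div_mul_div_comm]
      congr 1
      have : i + (m - i) = m := by omega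
      calc (2:ℝ) * 4 ^ i * (2 * 4 ^ (m - i)) = 4 * (4 ^ i * 4 ^ (m-i)) := by ring
        _ = 4 * 4 ^ m := by rw [← pow_add, this]
    rw [Finset.sum_congr rfl hstep, ← Finset.sum_div]
    have hcat : (∑ i ∈ Finset.range (m+1), (catalan i : ℝ) * (catalan (m - i) : ℝ))
        = (catalan (m+1) : ℝ) := by
      rw_mod_cast [← Finset.Nat.sum_antidiagonal_eq_sum_range_succ (fun i j => catalan i * catalan j) m,
        ← catalan_succ' m]
    rw [hcat]
    simp only [sibuya]
    have : (m+2:ℕ) ≠ 1 := by omega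
    simp only [this, if_false]
    rw [pow_succ]
    ring

/-- partial tsum fact: summability of `n ↦ sibuya n * s^n` for `s ∈ [0,1]`. -/
lemma sibuya_summable_pow {s : ℝ} (h0 : 0 ≤ s) (h1 : s ≤ 1) :
    Summable (fun n => sibuya n * s ^ n) := by
  apply Summable.of_nonneg_of_le (fun n => mul_nonneg (sibuya_nonneg n) (pow_nonneg h0 n))
    (fun n => ?_) sibuya_summable
  calc sibuya n * s ^ n ≤ sibuya n * 1 := by
        apply mul_le_mul_of_nonneg_left _ (sibuya_nonneg n)
        exact pow_le_one₀ h0 h1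
    _ = sibuya n := mul_one _

/-- The quadratic functional equation `F(s)² = 2F(s) - s`. -/
lemma sibuya_sq {s : ℝ} (h0 : 0 ≤ s) (h1 : s ≤ 1) :
    (∑' n, sibuya n * s ^ n) ^ 2 = 2 * (∑' n, sibuya n * s ^ n) - s := by
  have hsum := sibuya_summable_pow h0 h1
  have hnorm : Summable (fun n => ‖sibuya n * s ^ n‖) := by
    apply hsum.congr
    intro n
    rw [Real.norm_eq_abs, abs_of_nonneg (mul_nonneg (sibuya_nonneg n) (pow_nonneg h0 n))]
  have cauchy := tsum_mul_tsum_eq_tsum_sum_antidiagonal_of_summable_norm hnorm hnorm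
  rw [sq, cauchy]
  have hinner : ∀ N, (∑ kl ∈ Finset.HasAntidiagonal.antidiagonal N,
      (sibuya kl.1 * s ^ kl.1) * (sibuya kl.2 * s ^ kl.2))
      = 2 * (sibuya N * s ^ N) - (if N = 1 then 1 else 0) * s ^ N := by
    intro N
    have : ∀ kl ∈ Finset.HasAntidiagonal.antidiagonal N,
        (sibuya kl.1 * s ^ kl.1) * (sibuya kl.2 * s ^ kl.2)
          = (sibuya kl.1 * sibuya kl.2) * s ^ N := by
      intro kl hkl
      have : kl.1 + kl.2 = N := Finset.HasAntidiagonal.mem_antidiagonal.mp hkl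
      rw [← this, pow_add]; ring
    rw [Finset.sum_congr rfl this, ← Finset.sum_mul, sibuya_conv N]
    ring
  rw [tsum_congr hinner]
  have hite : Summable (fun N => (if N = 1 then (1:ℝ) else 0) * s ^ N) := by
    apply summable_of_ne_finset_zero (s := {1})
    intro N hN
    simp only [Finset.mem_singleton] at hN
    simp [hN]
  have hδ : (∑' N, (if N = 1 then (1:ℝ) else 0) * s ^ N) = s := by
    rw [tsum_eq_single 1 (by intro N hN; simp [hN])]
    simp
  rw [Summable.tsum_sub ((hsum.mul_left 2)) hite, tsum_mul_left, hδ]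

lemma sibuya_F1 : (∑' n, sibuya n * (1:ℝ) ^ n) = 1 := by
  have h := sibuya_sq (zero_le_one) (le_refl (1:ℝ))
  nlinarith [h]

lemma sibuya_tsum_eq_one : (∑' n, sibuya n) = 1 := by
  rw [← sibuya_F1]
  exact tsum_congr fun n => by simp

lemma sibuya_F {s : ℝ} (h0 : 0 ≤ s) (h1 : s ≤ 1) :
    (∑' n, sibuya n * s ^ n) = 1 - Real.sqrt (1 - s) := by
  set F := ∑' n, sibuya n * s ^ n with hF
  have hsq := sibuya_sq h0 h1
  have hle : F ≤ 1 := by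
    rw [← sibuya_tsum_eq_one]
    apply Summable.tsum_le_tsum _ (sibuya_summable_pow h0 h1) sibuya_summable
    intro n
    calc sibuya n * s ^ n ≤ sibuya n * 1 :=
          mul_le_mul_of_nonneg_left (pow_le_one₀ h0 h1) (sibuya_nonneg n)
      _ = sibuya n := mul_one _
  have key : (1 - F) ^ 2 = 1 - s := by nlinarith [hsq]
  have : Real.sqrt (1 - s) = 1 - F := by
    rw [← key, Real.sqrt_sq (by linarith)]
  linarith

/-! ### Coefficients of `P₀` -/

/-- `b` sequence: `b 1 = 1`, `b n = sibuya n` otherwise. -/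
noncomputable def bseq (n : ℕ) : ℝ := sibuya n + if n = 1 then 1/2 else 0

lemma bseq_nonneg (n : ℕ) : 0 ≤ bseq n := by
  unfold bseq; have := sibuya_nonneg n; split <;> linarith

lemma bseq_summable : Summable bseq := by
  apply Summable.add sibuya_summable
  apply summable_of_ne_finset_zero (s := {1})
  intro n hn
  simp only [Finset.mem_singleton] at hn
  simp [hn]

lemma bseq_zero : bseq 0 = 0 := by simp [bseq, sibuya]
lemma bseq_one : bseq 1 = 1 := by simp [bseq, sibuya]; norm_num
lemma bseq_two : bseq 2 = 1/8 := by
  simp [bseq, sibuya]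
  norm_num

lemma bseq_mono (n : ℕ) : bseq n ≤ 8 * bseq (n+1) := by
  match n with
  | 0 => rw [bseq_zero, bseq_one]; norm_num
  | 1 => rw [bseq_one, bseq_two]; norm_num
  | (m+2) =>
    show sibuya (m+2) + ite _ _ _ ≤ 8 * (sibuya (m+3) + ite _ _ _)
    simp only [show (m+2:ℕ) ≠ 1 by omega, show (m+3:ℕ) ≠ 1 by omega, if_neg, ite_false,
      add_zero]
    show (catalan (m+1) : ℝ) / (2 * 4 ^ (m+1)) ≤ 8 * ((catalan (m+2) : ℝ) / (2 * 4 ^ (m+2)))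
    have hc : (catalan (m+1) : ℝ) ≤ 2 * catalan (m+2) := by
      have h := catalan_le_catalan_succ (m+1)
      have : (catalan (m+1) : ℝ) ≤ catalan (m+2) := by exact_mod_cast h
      linarith [this, Nat.cast_nonneg (α := ℝ) (catalan (m+2))]
    have h4 : (0:ℝ) < 4 ^ (m+1) := by positivity
    rw [pow_succ (4:ℝ) (m+1), mul_div_assoc' (8:ℝ),
      div_le_div_iff₀ (by positivity) (by positivity)]
    nlinarith [h4, hc]

/-- Coefficients of `P₀`. -/
noncomputable def qseq : ℕ → ℝ
  | 0 => 0
  | (N+1) => (6 * bseq (N+1) - qseq N) / 8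

lemma qseq_bounds (N : ℕ) : 0 ≤ qseq N ∧ qseq N ≤ 3/4 * bseq N := by
  induction N with
  | zero => constructor <;> simp [qseq, bseq_zero]
  | succ N ih =>
    obtain ⟨h0, h1⟩ := ih
    have hb := bseq_mono N
    constructor
    · show 0 ≤ (6 * bseq (N+1) - qseq N) / 8
      have : qseq N ≤ 6 * bseq (N+1) := by linarith
      linarith [div_nonneg (by linarith : (0:ℝ) ≤ 6 * bseq (N+1) - qseq N) (by norm_num : (0:ℝ) ≤ 8)]
    · show (6 * bseq (N+1) - qseq N) / 8 ≤ 3/4 * bseq (N+1)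
      rw [div_le_iff₀ (by norm_num : (0:ℝ) < 8)]
      linarith

lemma qseq_nonneg (N : ℕ) : 0 ≤ qseq N := (qseq_bounds N).1

lemma qseq_summable : Summable qseq :=
  Summable.of_nonneg_of_le qseq_nonneg (fun n => (qseq_bounds n).2)
    (bseq_summable.mul_left (3/4))

lemma bseq_summable_pow {s : ℝ} (h0 : 0 ≤ s) (h1 : s ≤ 1) :
    Summable (fun n => bseq n * s ^ n) := by
  apply Summable.of_nonneg_of_le (fun n => mul_nonneg (bseq_nonneg n) (pow_nonneg h0 n))
    (fun n => ?_) bseq_summable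
  calc bseq n * s ^ n ≤ bseq n * 1 :=
        mul_le_mul_of_nonneg_left (pow_le_one₀ h0 h1) (bseq_nonneg n)
    _ = bseq n := mul_one _

lemma qseq_summable_pow {s : ℝ} (h0 : 0 ≤ s) (h1 : s ≤ 1) :
    Summable (fun n => qseq n * s ^ n) := by
  apply Summable.of_nonneg_of_le (fun n => mul_nonneg (qseq_nonneg n) (pow_nonneg h0 n))
    (fun n => ?_) qseq_summable
  calc qseq n * s ^ n ≤ qseq n * 1 :=
        mul_le_mul_of_nonneg_left (pow_le_one₀ h0 h1) (qseq_nonneg n)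
    _ = qseq n := mul_one _

lemma bseq_F {s : ℝ} (h0 : 0 ≤ s) (h1 : s ≤ 1) :
    (∑' n, bseq n * s ^ n) = (1 - Real.sqrt (1 - s)) + 1/2 * s := by
  have hind : Summable (fun n => (if n = 1 then (1:ℝ)/2 else 0) * s ^ n) := by
    apply summable_of_ne_finset_zero (s := {1})
    intro n hn
    simp only [Finset.mem_singleton] at hn
    simp [hn]
  have hsplit : ∀ n, bseq n * s ^ n
      = sibuya n * s ^ n + (if n = 1 then (1:ℝ)/2 else 0) * s ^ n := by
    intro n; unfold bseq; ring
  rw [tsum_congr hsplit, Summable.tsum_add (sibuya_summable_pow h0 h1) hind, sibuya_F h0 h1]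
  congr 1
  rw [tsum_eq_single 1 (by intro n hn; simp [hn])]
  simp

lemma qseq_F {s : ℝ} (h0 : 0 ≤ s) (h1 : s ≤ 1) :
    (∑' n, qseq n * s ^ n) = (6 + 3*s - 6*Real.sqrt (1-s)) / (8 + s) := by
  set Q := ∑' n, qseq n * s ^ n with hQdef
  set B := ∑' n, bseq n * s ^ n with hBdef
  have hQs := qseq_summable_pow h0 h1
  have hBs := bseq_summable_pow h0 h1
  have hfs : Summable (fun n => (6 * bseq n - 8 * qseq n) * s ^ n) := by
    apply Summable.congr (Summable.sub (hBs.mul_left 6) (hQs.mul_left 8))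
    intro n; ring
  have key : 6 * B - 8 * Q = s * Q := by
    have e1 : (∑' n, (6 * bseq n - 8 * qseq n) * s ^ n) = 6 * B - 8 * Q := by
      rw [hBdef, hQdef, ← tsum_mul_left, ← tsum_mul_left,
        ← Summable.tsum_sub (hBs.mul_left 6) (hQs.mul_left 8)]
      exact tsum_congr fun n => by ring
    have e2 : (∑' n, (6 * bseq n - 8 * qseq n) * s ^ n) = s * Q := by
      rw [Summable.tsum_eq_zero_add hfs]
      have h00 : (6 * bseq 0 - 8 * qseq 0) * s ^ 0 = 0 := by
        rw [bseq_zero]; show (6 * 0 - 8 * 0) * s ^ 0 = 0; ring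
      have hrec : ∀ n : ℕ, (6 * bseq (n+1) - 8 * qseq (n+1)) * s ^ (n+1)
          = (qseq n * s ^ n) * s := by
        intro n
        have : 8 * qseq (n+1) = 6 * bseq (n+1) - qseq n := by
          show 8 * ((6 * bseq (n+1) - qseq n) / 8) = _
          ring
        rw [show 6 * bseq (n+1) - 8 * qseq (n+1) = qseq n by linarith, pow_succ]
        ring
      rw [h00, zero_add, tsum_congr hrec, tsum_mul_right]
      ring
    rw [← e1, e2]
  have hB : B = (1 - Real.sqrt (1 - s)) + 1/2 * s := bseq_F h0 h1
  have h8 : (8:ℝ) + s ≠ 0 := by linarith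
  rw [eq_div_iff h8]
  rw [hB] at key
  ring_nf
  ring_nf at key
  linarith

lemma qseq_tsum_eq_one : (∑' n, qseq n) = 1 := by
  have h := qseq_F (zero_le_one) (le_refl (1:ℝ))
  simp only [one_pow, mul_one] at h
  rw [h]
  norm_num

/-! ### The main theorem -/

/-- There are a PGF `P`, a constant `c ∈ (0,1)` and a PGF `P₀` with
`P(s) = P(1-c+cs)·P₀(s)` on `(0,1)`, yet the distribution with PGF `P` is not
infinitely divisible. -/
theorem stmt13 :
    ∃ (Pf P₀ : ℝ → ℝ) (c : ℝ), IsPGF Pf ∧ IsPGF P₀ ∧ 0 < c ∧ c < 1 ∧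
      (∀ s ∈ Ioo (0:ℝ) 1, Pf s = Pf (1 - c + c * s) * P₀ s) ∧ ¬ IsIDPGF Pf := by
  refine ⟨fun s => 1 - Real.sqrt (1 - s),
    fun s => (6 + 3*s - 6*Real.sqrt (1-s)) / (8 + s), 1/9,
    ⟨sibuya, sibuya_nonneg, sibuya_tsum_eq_one, fun s hs => (sibuya_F hs.1 hs.2).symm⟩,
    ⟨qseq, qseq_nonneg, qseq_tsum_eq_one, fun s hs => (qseq_F hs.1 hs.2).symm⟩,
    by norm_num, by norm_num, ?_, ?_⟩
  · -- functional equation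
    rintro s ⟨hs0, hs1⟩
    have h1s : (0:ℝ) ≤ 1 - s := by linarith
    set u := Real.sqrt (1 - s) with hu
    have hu0 : 0 ≤ u := Real.sqrt_nonneg _
    have hu2 : u ^ 2 = 1 - s := Real.sq_sqrt h1s
    have hsub : Real.sqrt (1 - (1 - 1/9 + 1/9 * s)) = u / 3 := by
      have : 1 - (1 - 1/9 + 1/9 * s) = (u/3)^2 := by
        rw [div_pow, hu2]; ring
      rw [this, Real.sqrt_sq (by positivity)]
    simp only []
    rw [hsub]
    have h8 : (8:ℝ) + s ≠ 0 := by linarith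
    field_simp
    nlinarith [hu2]
  · -- not infinitely divisible
    intro hID
    obtain ⟨Q, ⟨r, hr0, hr1, hrep⟩, hPQ⟩ := hID 2 (by norm_num)
    have hrsum : Summable r := by
      by_contra h
      rw [tsum_eq_zero_of_not_summable h] at hr1
      norm_num at hr1
    have hQ0 : Q 0 = 0 := by
      have h := hPQ 0 ⟨le_refl 0, zero_le_one⟩
      have : Q 0 ^ 2 = 0 := by
        rw [← h]; simp
      exact pow_eq_zero_iff (by norm_num) |>.mp this
    have hr00 : r 0 = 0 := by
      have h := hrep 0 ⟨le_refl 0, zero_le_one⟩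
      rw [tsum_eq_single 0 (by intro n hn; simp [zero_pow hn])] at h
      simpa [hQ0] using h.symm
    have hmem : (1/4 : ℝ) ∈ Icc (0:ℝ) 1 := ⟨by norm_num, by norm_num⟩
    have hrsum4 : Summable (fun n => r n * (1/4:ℝ) ^ n) := by
      apply Summable.of_nonneg_of_le
        (fun n => mul_nonneg (hr0 n) (by positivity)) (fun n => ?_) hrsum
      calc r n * (1/4:ℝ) ^ n ≤ r n * 1 :=
            mul_le_mul_of_nonneg_left (pow_le_one₀ (by norm_num) (by norm_num)) (hr0 n)
        _ = r n := mul_one _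
    have hQle : Q (1/4) ≤ 1/4 := by
      rw [hrep (1/4) hmem]
      calc (∑' n, r n * (1/4:ℝ)^n) ≤ ∑' n, r n * (1/4:ℝ) := by
            apply Summable.tsum_le_tsum _ hrsum4 (hrsum.mul_right _)
            intro n
            match n with
            | 0 => rw [hr00]; norm_num
            | (m+1) =>
              apply mul_le_mul_of_nonneg_left _ (hr0 (m+1))
              calc (1/4:ℝ)^(m+1) ≤ (1/4:ℝ)^1 :=
                    pow_le_pow_of_le_one (by norm_num) (by norm_num) (by omega)
                _ = 1/4 := pow_one _
        _ = 1/4 := by rw [tsum_mul_right, hr1, one_mul]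
    have hQ0le : 0 ≤ Q (1/4) := by
      rw [hrep (1/4) hmem]
      exact tsum_nonneg fun n => mul_nonneg (hr0 n) (by positivity)
    have hPval := hPQ (1/4) hmem
    have hsqrt : Real.sqrt (1 - 1/4) < 15/16 := by
      rw [Real.sqrt_lt' (by norm_num)]
      norm_num
    nlinarith [hPval, hsqrt, hQle, hQ0le]
end
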